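/- arXiv:1102.4869 — 5 statements merged into one kernel-verified Lean document; each statement's English description precedes it below -/
import Mathlib

section
/- Let A be the Fell C*-algebra of a continuous Hilbert bundle (T, {H_t}_{t∈T}, Ω) over a locally compact Hausdorff space T, and let I be an ideal of A. Then the triple (βX^I, {H_t^I}_{t∈βX^I}, Ω^I) is a continuous Hilbert bundle over the compact Hausdorff space βX^I; that is, Ω^I satisfies axioms (I)–(IV) with respect to the fibres H_t^I. -/
/- Common definitions: continuous Hilbert bundles and Fell (spatial continuous
trace) C*-algebras, following Fell (1961). -/

noncomputable section

/-- A vector field `ξ` is a local uniform limit of members of `S`. -/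
def LocUnifApprox {T : Type*} [TopologicalSpace T] {H : T → Type*}
    [∀ t, NormedAddCommGroup (H t)] (S : Set (∀ t, H t)) (ξ : ∀ t, H t) : Prop :=
  ∀ (t₀ : T) (ε : ℝ), 0 < ε → ∃ U : Set T, IsOpen U ∧ t₀ ∈ U ∧
    ∃ ω ∈ S, ∀ t ∈ U, ‖ω t - ξ t‖ < ε

/-- Axioms (I)-(IV) of a continuous Hilbert bundle `(T, {H t}, Ω)`. -/
structure IsCtsHilbertBundle {T : Type*} [TopologicalSpace T] {H : T → Type*}
    [∀ t, NormedAddCommGroup (H t)] [∀ t, InnerProductSpace ℂ (H t)]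
    (Ω : Set (∀ t, H t)) : Prop where
  /-- axiom (I): `Ω` is a `C(T)`-module (additive part) -/
  zero_mem : (fun t => (0 : H t)) ∈ Ω
  add_mem : ∀ ω ∈ Ω, ∀ ν ∈ Ω, (fun t => ω t + ν t) ∈ Ω
  /-- axiom (I): `C(T)`-action -/
  smul_mem : ∀ (f : C(T, ℂ)), ∀ ω ∈ Ω, (fun t => f t • ω t) ∈ Ω
  /-- axiom (II) -/
  full : ∀ (t : T) (v : H t), ∃ ω ∈ Ω, ω t = v
  /-- axiom (III) -/
  norm_continuous : ∀ ω ∈ Ω, Continuous fun t => ‖ω t‖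
  /-- axiom (IV) -/
  closed_locUnif : ∀ ξ : ∀ t, H t, LocUnifApprox Ω ξ → ξ ∈ Ω

variable {T : Type*} [TopologicalSpace T] {H : T → Type*}
  [∀ t, NormedAddCommGroup (H t)] [∀ t, InnerProductSpace ℂ (H t)]
  [∀ t, CompleteSpace (H t)]

/-- An operator field is weakly continuous w.r.t. the bundle `Ω`. -/
def WeaklyCts (Ω : Set (∀ t, H t)) (a : ∀ t, H t →L[ℂ] H t) : Prop :=
  ∀ ω₁ ∈ Ω, ∀ ω₂ ∈ Ω, Continuous fun t => (inner ℂ (a t (ω₁ t)) (ω₂ t) : ℂ)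

/-- An operator field is almost finite-dimensional w.r.t. the bundle `Ω`. -/
def AlmostFinDim (Ω : Set (∀ t, H t)) (a : ∀ t, H t →L[ℂ] H t) : Prop :=
  ∀ (t₀ : T) (ε : ℝ), 0 < ε → ∃ U : Set T, IsOpen U ∧ t₀ ∈ U ∧
    ∃ (n : ℕ) (ω : Fin n → ∀ t, H t), (∀ i, ω i ∈ Ω) ∧ ∀ t ∈ U,
      LinearIndependent ℂ (fun i => ω i t) ∧
      ∃ p : H t →L[ℂ] H t, IsIdempotentElem p ∧ IsSelfAdjoint p ∧
        LinearMap.range (p : H t →ₗ[ℂ] H t) = Submodule.span ℂ (Set.range fun i => ω i t) ∧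
        ‖p * a t * p - a t‖ < ε

/-- The Fell (spatial continuous-trace) C*-algebra `A(T, {H t}, Ω)`: all weakly
continuous, almost finite-dimensional operator fields whose pointwise norm
function lies in `C₀(T)`; a set of operator fields with pointwise operations. -/
def FellAlgebra (Ω : Set (∀ t, H t)) : Set (∀ t, H t →L[ℂ] H t) :=
  {a | WeaklyCts Ω a ∧ AlmostFinDim Ω a ∧ (Continuous fun t => ‖a t‖) ∧
    Filter.Tendsto (fun t => ‖a t‖) (Filter.cocompact T) (nhds 0)}

/-- `I` is a (closed, two-sided, star) ideal of the C*-algebra of operator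
fields `A` (with pointwise operations and supremum norm). -/
structure IsIdealOf (A I : Set (∀ t, H t →L[ℂ] H t)) : Prop where
  subset : I ⊆ A
  zero_mem : (0 : ∀ t, H t →L[ℂ] H t) ∈ I
  add_mem : ∀ a ∈ I, ∀ b ∈ I, a + b ∈ I
  smul_mem : ∀ (c : ℂ), ∀ a ∈ I, c • a ∈ I
  star_mem : ∀ a ∈ I, star a ∈ I
  mul_mem_left : ∀ a ∈ A, ∀ b ∈ I, a * b ∈ I
  mul_mem_right : ∀ a ∈ I, ∀ b ∈ A, a * b ∈ I
  norm_closed : ∀ a ∈ A, (∀ ε : ℝ, 0 < ε → ∃ b ∈ I, ∀ t, ‖a t - b t‖ < ε) → a ∈ I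

/-- `I` is an essential ideal of `A`: it has nonzero intersection with every
nonzero ideal of `A`. -/
def IsEssentialIdealOf (A I : Set (∀ t, H t →L[ℂ] H t)) : Prop :=
  IsIdealOf A I ∧
    ∀ J, IsIdealOf A J → (∃ b ∈ J, b ≠ 0) → ∃ c, c ∈ I ∧ c ∈ J ∧ c ≠ 0

/-- The open set `X^I ⊆ T` associated with an ideal `I`
(the complement of `Z^I = {t | b t = 0 ∀ b ∈ I}`). -/
def idealSupp (I : Set (∀ t, H t →L[ℂ] H t)) : Set T :=
  {t | ∃ b ∈ I, b t ≠ 0}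

/-- `Ω_b`: the bounded vector fields of the bundle. -/
def boundedFields (Ω : Set (∀ t, H t)) : Set (∀ t, H t) :=
  {ω | ω ∈ Ω ∧ ∃ M : ℝ, ∀ t, ‖ω t‖ ≤ M}

/-- The rank-one operator field `Θ_{ω,ν} : ξ ↦ ⟨ξ, ν⟩·ω` (inner product linear
in `ξ`, conjugate-linear in `ν`). -/
def rankOneField (ω ν : ∀ t, H t) : ∀ t, H t →L[ℂ] H t :=
  fun t => (innerSL ℂ (ν t)).smulRight (ω t)

/-- `F(S)`: finite sums of rank-one fields `Θ_{ω,ν}` with `ω, ν ∈ S`. -/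
def finRankFields (S : Set (∀ t, H t)) : Set (∀ t, H t →L[ℂ] H t) :=
  {a | ∃ (n : ℕ) (ω ν : Fin n → ∀ t, H t), (∀ i, ω i ∈ S) ∧ (∀ i, ν i ∈ S) ∧
    a = fun t => ∑ i, rankOneField (ω i) (ν i) t}

/-- An operator field `x` is strictly continuous with respect to a family `F`
of operator fields. -/
def StrictlyCts (F : Set (∀ t, H t →L[ℂ] H t)) (x : ∀ t, H t →L[ℂ] H t) : Prop :=
  ∀ (t₀ : T), ∀ a ∈ F, ∀ ε : ℝ, 0 < ε → ∃ U : Set T, IsOpen U ∧ t₀ ∈ U ∧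
    ∃ b ∈ F, ∀ t ∈ U, ‖(x t - b t) * a t‖ + ‖a t * (x t - b t)‖ < ε

/-- The concrete realisation (Akemann–Pedersen–Tomiyama) of the multiplier
algebra: bounded operator fields, strictly continuous w.r.t. `F`. -/
def MultSet (F : Set (∀ t, H t →L[ℂ] H t)) : Set (∀ t, H t →L[ℂ] H t) :=
  {x | (∃ C : ℝ, ∀ t, ‖x t‖ ≤ C) ∧ StrictlyCts F x}

/-- Conjugation of an operator by a unitary (linear isometric equivalence). -/
def conjCLM {E F : Type*} [NormedAddCommGroup E] [NormedAddCommGroup F]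
    [NormedSpace ℂ E] [NormedSpace ℂ F] (e : E ≃ₗᵢ[ℂ] F) (x : E →L[ℂ] E) :
    F →L[ℂ] F :=
  ((e.toContinuousLinearEquiv : E →L[ℂ] F).comp x).comp
    (e.symm.toContinuousLinearEquiv : F →L[ℂ] E)

end
set_option maxHeartbeats 2000000 in
/-- Proposition `prop: ext chb`.  Let `A` be the Fell
C*-algebra of a continuous Hilbert bundle `(T, {H_t}, Ω)` over a locally compact
Hausdorff space `T` and let `I` be an ideal of `A`.  Given the Stone–Čech
compactification `βX^I` of the open set `X^I` and the fibres `H_t^I`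
(the completions of `Ω_b|_{X^I}` w.r.t. the extended pre-inner products, with
induced vector fields `ω̄^I = bar ω` and `E^I = bar '' Ω_b`), the triple
`(βX^I, {H_t^I}, Ω^I)` — where `Ω^I` is the set of local uniform limits of
elements of `E^I` — is a continuous Hilbert bundle. -/
theorem extended_bundle_isCtsHilbertBundle
    {T : Type} [TopologicalSpace T] [LocallyCompactSpace T] [T2Space T]
    {H : T → Type} [∀ t, NormedAddCommGroup (H t)] [∀ t, InnerProductSpace ℂ (H t)]
    [∀ t, CompleteSpace (H t)]
    (Ω : Set (∀ t, H t)) (hΩ : IsCtsHilbertBundle Ω)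
    (I : Set (∀ t, H t →L[ℂ] H t)) (hI : IsIdealOf (FellAlgebra Ω) I)
    -- the Stone–Čech compactification `βX^I` of `X^I`:
    {βX : Type} [TopologicalSpace βX] [CompactSpace βX] [T2Space βX]
    (ι : idealSupp I → βX) (hι : Topology.IsEmbedding ι) (hιdense : DenseRange ι)
    -- the fibres `H_t^I`, `t ∈ βX^I`:
    {HI : βX → Type} [∀ u, NormedAddCommGroup (HI u)]
    [∀ u, InnerProductSpace ℂ (HI u)] [∀ u, CompleteSpace (HI u)]
    -- `bar ω = ω̄^I`, the induced vector field on `βX^I` of `ω ∈ Ω_b`: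
    (bar : (∀ t, H t) → ∀ u, HI u)
    (hbar_add : ∀ ω ∈ boundedFields Ω, ∀ ν ∈ boundedFields Ω,
      bar (ω + ν) = bar ω + bar ν)
    (hbar_smul : ∀ (c : ℂ), ∀ ω ∈ boundedFields Ω, bar (c • ω) = c • bar ω)
    -- the extended inner products `⟨ω̄^I, ν̄^I⟩` are continuous on `βX^I` …
    (hbar_inner_cont : ∀ ω ∈ boundedFields Ω, ∀ ν ∈ boundedFields Ω,
      Continuous fun u => (inner ℂ (bar ω u) (bar ν u) : ℂ))
    -- … and extend the pointwise inner products on `X^I`: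
    (hbar_inner_eq : ∀ ω ∈ boundedFields Ω, ∀ ν ∈ boundedFields Ω,
      ∀ x : idealSupp I, (inner ℂ (bar ω (ι x)) (bar ν (ι x)) : ℂ) =
        (inner ℂ (ω x.1) (ν x.1) : ℂ))
    -- each fibre `H_t^I` is the completion: `{ω̄^I(t) : ω ∈ Ω_b}` is dense:
    (hbar_dense : ∀ (u : βX) (v : HI u) (ε : ℝ), 0 < ε →
      ∃ ω ∈ boundedFields Ω, ‖bar ω u - v‖ < ε) :
    -- conclusion: `Ω^I` satisfies axioms (I)–(IV) over `βX^I`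
    IsCtsHilbertBundle
      {ν : ∀ u, HI u | LocUnifApprox (bar '' boundedFields Ω) ν} := by
  classical
  set E : Set (∀ u, HI u) := bar '' boundedFields Ω with hE
  set ΩI : Set (∀ u, HI u) := {ν : ∀ u, HI u | LocUnifApprox E ν} with hΩIdef
  have hmem : ∀ ξ : ∀ u, HI u, ξ ∈ ΩI ↔ LocUnifApprox E ξ := fun _ => Iff.rfl
  -- `E ⊆ ΩI`
  have hEsub : ∀ ν ∈ E, ν ∈ ΩI := by
    intro ν hν
    rw [hmem]
    intro u₀ ε hε
    exact ⟨Set.univ, isOpen_univ, trivial, ν, hν, fun u _ => by simpa using hε⟩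
  -- norm continuity of elements of `E`
  have hEnorm : ∀ ω ∈ boundedFields Ω, Continuous fun u => ‖bar ω u‖ := by
    intro ω hω
    have h := hbar_inner_cont ω hω ω hω
    have heq : (fun u => ‖bar ω u‖)
        = fun u => Real.sqrt (RCLike.re (inner ℂ (bar ω u) (bar ω u) : ℂ)) :=
      funext fun u => norm_eq_sqrt_re_inner (𝕜 := ℂ) _
    rw [heq]
    exact (RCLike.continuous_re.comp h).sqrt
  -- norm continuity on `ΩI`
  have hΩInorm : ∀ ν ∈ ΩI, Continuous fun u => ‖ν u‖ := by
    intro ν hν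
    have hν' : LocUnifApprox E ν := hν
    rw [continuous_iff_continuousAt]
    intro u₀
    rw [ContinuousAt, Metric.tendsto_nhds]
    intro ε hε
    obtain ⟨U, hUo, hu₀U, μ, hμE, hμ⟩ := hν' u₀ (ε / 3) (by linarith)
    obtain ⟨ω, hω, rfl⟩ := hμE
    have hc : Continuous fun u => ‖bar ω u‖ := hEnorm ω hω
    have hnb : ∀ᶠ u in nhds u₀, dist ‖bar ω u‖ ‖bar ω u₀‖ < ε / 3 :=
      (Metric.tendsto_nhds.mp (hc.continuousAt (x := u₀))) (ε / 3) (by linarith)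
    filter_upwards [hUo.mem_nhds hu₀U, hnb] with u hU hb
    have h1 := hμ u hU
    have h2 := hμ u₀ hu₀U
    rw [Real.dist_eq] at hb ⊢
    have h3 : |‖ν u‖ - ‖bar ω u‖| < ε / 3 := by
      rw [abs_sub_comm]
      exact lt_of_le_of_lt (abs_norm_sub_norm_le _ _) h1
    have h4 : |‖bar ω u₀‖ - ‖ν u₀‖| < ε / 3 :=
      lt_of_le_of_lt (abs_norm_sub_norm_le _ _) h2
    have t1 := abs_sub_le (‖ν u‖) (‖bar ω u‖) (‖ν u₀‖)
    have t2 := abs_sub_le (‖bar ω u‖) (‖bar ω u₀‖) (‖ν u₀‖)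
    linarith
  -- transitivity of local uniform approximation
  have htrans : ∀ ν : ∀ u, HI u, LocUnifApprox ΩI ν → ν ∈ ΩI := by
    intro ν h
    rw [hmem]
    intro u₀ ε hε
    obtain ⟨U₁, hU₁, hu₁, ξ, hξ, hξa⟩ := h u₀ (ε / 2) (by linarith)
    obtain ⟨U₂, hU₂, hu₂, μ, hμ, hμa⟩ := (hmem ξ).mp hξ u₀ (ε / 2) (by linarith)
    refine ⟨U₁ ∩ U₂, hU₁.inter hU₂, ⟨hu₁, hu₂⟩, μ, hμ, fun u hu => ?_⟩
    have hrw : μ u - ν u = (μ u - ξ u) + (ξ u - ν u) := by abel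
    rw [hrw]
    exact lt_of_le_of_lt (norm_add_le _ _) (by linarith [hμa u hu.2, hξa u hu.1])
  -- zero field
  have hz : (fun t => (0 : H t)) ∈ boundedFields Ω :=
    ⟨hΩ.zero_mem, 0, fun t => by simp⟩
  have hb0 : bar (fun t => (0 : H t)) = fun u => (0 : HI u) := by
    have h1 : ((0 : ℂ) • fun t => (0 : H t)) = (fun t => (0 : H t)) := by
      funext t; simp
    have h2 := hbar_smul 0 _ hz
    rw [h1] at h2
    rw [h2]; funext u; exact zero_smul ℂ _
  have hzero : (fun u => (0 : HI u)) ∈ ΩI := hEsub _ ⟨_, hz, hb0⟩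
  -- closure under addition
  have hadd : ∀ ν₁ ∈ ΩI, ∀ ν₂ ∈ ΩI, (fun u => ν₁ u + ν₂ u) ∈ ΩI := by
    intro ν₁ h₁ ν₂ h₂
    rw [hmem]
    intro u₀ ε hε
    obtain ⟨U₁, hU₁, hu₁, μ₁, hμ₁E, hμ₁⟩ := (hmem ν₁).mp h₁ u₀ (ε / 2) (by linarith)
    obtain ⟨U₂, hU₂, hu₂, μ₂, hμ₂E, hμ₂⟩ := (hmem ν₂).mp h₂ u₀ (ε / 2) (by linarith)
    obtain ⟨ω₁, hω₁, rfl⟩ := hμ₁E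
    obtain ⟨ω₂, hω₂, rfl⟩ := hμ₂E
    have hsum : (ω₁ + ω₂) ∈ boundedFields Ω := by
      obtain ⟨hm₁, M₁, hM₁⟩ := hω₁
      obtain ⟨hm₂, M₂, hM₂⟩ := hω₂
      exact ⟨hΩ.add_mem ω₁ hm₁ ω₂ hm₂, M₁ + M₂, fun t =>
        le_trans (norm_add_le _ _) (add_le_add (hM₁ t) (hM₂ t))⟩
    refine ⟨U₁ ∩ U₂, hU₁.inter hU₂, ⟨hu₁, hu₂⟩, bar (ω₁ + ω₂),
      ⟨ω₁ + ω₂, hsum, rfl⟩, fun u hu => ?_⟩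
    rw [hbar_add ω₁ ⟨hω₁.1, hω₁.2⟩ ω₂ ⟨hω₂.1, hω₂.2⟩]
    show ‖bar ω₁ u + bar ω₂ u - (ν₁ u + ν₂ u)‖ < ε
    have hrw : bar ω₁ u + bar ω₂ u - (ν₁ u + ν₂ u)
        = (bar ω₁ u - ν₁ u) + (bar ω₂ u - ν₂ u) := by abel
    rw [hrw]
    exact lt_of_le_of_lt (norm_add_le _ _) (by linarith [hμ₁ u hu.1, hμ₂ u hu.2])
  -- closure under scalar multiplication by constants
  have hsmulc : ∀ (c : ℂ), ∀ ν ∈ ΩI, (fun u => c • ν u) ∈ ΩI := by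
    intro c ν hν
    rw [hmem]
    intro u₀ ε hε
    have hpos : 0 < ε / (‖c‖ + 1) := by positivity
    obtain ⟨U, hU, hu, μ, hμE, hμ⟩ := (hmem ν).mp hν u₀ _ hpos
    obtain ⟨ω, hω, rfl⟩ := hμE
    have hcω : (c • ω) ∈ boundedFields Ω := by
      obtain ⟨hm, M, hM⟩ := hω
      refine ⟨hΩ.smul_mem (ContinuousMap.const T c) ω hm, ‖c‖ * M, fun t => ?_⟩
      have : ‖(c • ω) t‖ = ‖c‖ * ‖ω t‖ := norm_smul c (ω t)
      rw [this]
      exact mul_le_mul_of_nonneg_left (hM t) (norm_nonneg c)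
    refine ⟨U, hU, hu, bar (c • ω), ⟨c • ω, hcω, rfl⟩, fun u huU => ?_⟩
    rw [hbar_smul c ω hω]
    show ‖c • bar ω u - c • ν u‖ < ε
    rw [← smul_sub, norm_smul]
    have hnn := norm_nonneg (bar ω u - ν u)
    calc ‖c‖ * ‖bar ω u - ν u‖ ≤ (‖c‖ + 1) * ‖bar ω u - ν u‖ := by nlinarith
      _ < (‖c‖ + 1) * (ε / (‖c‖ + 1)) :=
        mul_lt_mul_of_pos_left (hμ u huU) (by positivity)
      _ = ε := by field_simp
  -- closure under multiplication by continuous functions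
  have hsmul : ∀ (f : C(βX, ℂ)), ∀ ν ∈ ΩI, (fun u => f u • ν u) ∈ ΩI := by
    intro f ν hν
    apply htrans
    intro u₀ ε hε
    have hM : (0 : ℝ) < ‖ν u₀‖ + 1 := by positivity
    have hc := hΩInorm ν hν
    have hV : IsOpen {u : βX | ‖ν u‖ < ‖ν u₀‖ + 1} := isOpen_lt hc continuous_const
    have hW : IsOpen {u : βX | ‖f u - f u₀‖ < ε / (‖ν u₀‖ + 1)} := by
      have : Continuous fun u => ‖f u - f u₀‖ := (f.continuous.sub continuous_const).norm
      exact isOpen_lt this continuous_const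
    refine ⟨_ ∩ _, hV.inter hW, ⟨by simp only [Set.mem_setOf_eq]; linarith,
      by simp only [Set.mem_setOf_eq, sub_self, norm_zero]; positivity⟩,
      (fun u => f u₀ • ν u), hsmulc _ _ hν, fun u hu => ?_⟩
    obtain ⟨h1, h2⟩ := hu
    show ‖f u₀ • ν u - f u • ν u‖ < ε
    rw [← sub_smul, norm_smul]
    calc ‖f u₀ - f u‖ * ‖ν u‖ ≤ ‖f u₀ - f u‖ * (‖ν u₀‖ + 1) :=
          mul_le_mul_of_nonneg_left h1.le (norm_nonneg _)
      _ < (ε / (‖ν u₀‖ + 1)) * (‖ν u₀‖ + 1) :=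
          mul_lt_mul_of_pos_right (by rwa [norm_sub_rev]) hM
      _ = ε := by field_simp
  -- fullness
  have hfull : ∀ (u : βX) (v : HI u), ∃ ν ∈ ΩI, ν u = v := by
    intro u v
    have hd : ∀ (n : ℕ) (r : HI u), ∃ ω ∈ boundedFields Ω,
        ‖bar ω u - r‖ < (2 : ℝ)⁻¹ ^ (n + 1) :=
      fun n r => hbar_dense u r _ (by positivity)
    choose pick hpick1 hpick2 using hd
    let r : ℕ → HI u := fun n => Nat.rec v (fun k rk => rk - bar (pick k rk) u) n
    let ω : ℕ → ∀ t, H t := fun n => pick n (r n)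
    have hr0 : r 0 = v := rfl
    have hrs : ∀ n, r (n + 1) = r n - bar (ω n) u := fun n => rfl
    have hωmem : ∀ n, ω n ∈ boundedFields Ω := fun n => hpick1 n (r n)
    have hrb : ∀ n, ‖r (n + 1)‖ < (2 : ℝ)⁻¹ ^ (n + 1) := by
      intro n
      rw [hrs n, norm_sub_rev]
      exact hpick2 n (r n)
    have hsum : ∀ n, (∑ k ∈ Finset.range n, bar (ω k) u) = v - r n := by
      intro n
      induction n with
      | zero => simp [hr0]
      | succ n ih => rw [Finset.sum_range_succ, ih, hrs]; abel
    -- the bound sequence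
    have hBle : ∀ n, ‖bar (ω n) u‖ + (2 : ℝ)⁻¹ ^ (n + 1)
        ≤ (‖v‖ + 3) * (2 : ℝ)⁻¹ ^ n := by
      intro n
      have hn1 : ‖bar (ω n) u‖ ≤ (2 : ℝ)⁻¹ ^ (n + 1) + ‖r n‖ := by
        have := hpick2 n (r n)
        have htri : ‖bar (ω n) u‖ ≤ ‖bar (ω n) u - r n‖ + ‖r n‖ := by
          have := norm_add_le (bar (ω n) u - r n) (r n)
          simpa using this
        linarith
      match n with
      | 0 =>
        have : ‖r 0‖ = ‖v‖ := by rw [hr0]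
        have hp : ((2 : ℝ)⁻¹) ^ (0 + 1) = 2⁻¹ := by norm_num
        rw [pow_zero]
        rw [hp] at hn1 ⊢
        rw [this] at hn1
        linarith
      | (m + 1) =>
        have hrm := hrb m
        have hp : ((2 : ℝ)⁻¹) ^ (m + 1 + 1) = (2 : ℝ)⁻¹ ^ (m + 1) * 2⁻¹ := pow_succ _ _
        have hppos : (0 : ℝ) < (2 : ℝ)⁻¹ ^ (m + 1) := by positivity
        have hv : (0 : ℝ) ≤ ‖v‖ := norm_nonneg v
        have hexp : (‖v‖ + 3) * (2 : ℝ)⁻¹ ^ (m + 1)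
            = ‖v‖ * (2 : ℝ)⁻¹ ^ (m + 1) + 3 * (2 : ℝ)⁻¹ ^ (m + 1) := by ring
        have hvp : (0 : ℝ) ≤ ‖v‖ * (2 : ℝ)⁻¹ ^ (m + 1) := by positivity
        rw [hexp]
        rw [hp] at hn1 ⊢
        linarith
    have hBsum : Summable fun n => ‖bar (ω n) u‖ + (2 : ℝ)⁻¹ ^ (n + 1) := by
      apply Summable.of_nonneg_of_le (fun n => by positivity) hBle
      exact (summable_geometric_of_lt_one (by norm_num) (by norm_num)).mul_left _
    -- Urysohn cut-off functions
    have hVopen : ∀ n, IsOpen {w : βX | ‖bar (ω n) w‖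
        < ‖bar (ω n) u‖ + (2 : ℝ)⁻¹ ^ (n + 1)} :=
      fun n => isOpen_lt (hEnorm (ω n) (hωmem n)) continuous_const
    have hUry : ∀ n, ∃ f : C(βX, ℝ),
        (Set.EqOn f 0 {w : βX | ‖bar (ω n) w‖ < ‖bar (ω n) u‖ + (2 : ℝ)⁻¹ ^ (n + 1)}ᶜ)
        ∧ f u = 1 ∧ ∀ w, f w ∈ Set.Icc (0 : ℝ) 1 := by
      intro n
      have huV : u ∈ {w : βX | ‖bar (ω n) w‖ < ‖bar (ω n) u‖ + (2 : ℝ)⁻¹ ^ (n + 1)} := by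
        simp only [Set.mem_setOf_eq]
        have : (0 : ℝ) < (2 : ℝ)⁻¹ ^ (n + 1) := by positivity
        linarith
      obtain ⟨f, h0, h1, h01⟩ := exists_continuous_zero_one_of_isClosed
        ((hVopen n).isClosed_compl) (isClosed_singleton (x := u))
        (by rw [Set.disjoint_singleton_right]; simpa using huV)
      exact ⟨f, h0, h1 rfl, h01⟩
    choose f hf0 hf1 hf01 using hUry
    let g : ℕ → ∀ w, HI w := fun n w => ((f n w : ℝ) : ℂ) • bar (ω n) w
    have hgΩI : ∀ n, g n ∈ ΩI := by
      intro n
      exact hsmul ⟨fun w => ((f n w : ℝ) : ℂ),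
        Complex.continuous_ofReal.comp (f n).continuous⟩ (bar (ω n))
        (hEsub _ ⟨ω n, hωmem n, rfl⟩)
    have hgbound : ∀ n w, ‖g n w‖ ≤ ‖bar (ω n) u‖ + (2 : ℝ)⁻¹ ^ (n + 1) := by
      intro n w
      by_cases hw : w ∈ {w : βX | ‖bar (ω n) w‖ < ‖bar (ω n) u‖ + (2 : ℝ)⁻¹ ^ (n + 1)}
      · have h01 := hf01 n w
        have hle1 : ‖((f n w : ℝ) : ℂ)‖ ≤ 1 := by
          rw [Complex.norm_real, Real.norm_eq_abs, abs_le]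
          exact ⟨by linarith [h01.1], h01.2⟩
        calc ‖g n w‖ = ‖((f n w : ℝ) : ℂ)‖ * ‖bar (ω n) w‖ := norm_smul _ _
          _ ≤ 1 * (‖bar (ω n) u‖ + (2 : ℝ)⁻¹ ^ (n + 1)) :=
            mul_le_mul hle1 hw.le (norm_nonneg _) one_pos.le
          _ = _ := one_mul _
      · have hfw : f n w = 0 := hf0 n hw
        have : g n w = 0 := by
          show ((f n w : ℝ) : ℂ) • bar (ω n) w = 0
          rw [hfw]; simp
        rw [this, norm_zero]
        positivity
    have hgnorm : ∀ w, Summable fun n => ‖g n w‖ := fun w =>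
      Summable.of_nonneg_of_le (fun n => norm_nonneg _) (fun n => hgbound n w) hBsum
    have hgsummable : ∀ w, Summable fun n => g n w := fun w => (hgnorm w).of_norm
    refine ⟨fun w => ∑' n, g n w, ?_, ?_⟩
    · -- membership in ΩI
      apply htrans
      intro u₀ ε hε
      have htail : Filter.Tendsto (fun N => ∑' n, (‖bar (ω (n + N)) u‖
          + (2 : ℝ)⁻¹ ^ ((n + N) + 1))) Filter.atTop (nhds 0) :=
        tendsto_sum_nat_add (f := fun k => ‖bar (ω k) u‖ + (2 : ℝ)⁻¹ ^ (k + 1))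
      obtain ⟨N, hN⟩ := (htail.eventually (gt_mem_nhds hε)).exists
      have hfin : ∀ m, (fun w => ∑ n ∈ Finset.range m, g n w) ∈ ΩI := by
        intro m
        induction m with
        | zero => simpa using hzero
        | succ m ih =>
          have := hadd _ ih _ (hgΩI m)
          simpa [Finset.sum_range_succ] using this
      refine ⟨Set.univ, isOpen_univ, trivial, _, hfin N, fun w _ => ?_⟩
      have hsw : Summable fun n => g n w := hgsummable w
      have hswN : Summable fun n => g (n + N) w := (summable_nat_add_iff N).mpr hsw
      have hnormN : Summable fun n => ‖g (n + N) w‖ :=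
        (summable_nat_add_iff N).mpr (hgnorm w)
      have hBN : Summable fun n => ‖bar (ω (n + N)) u‖ + (2 : ℝ)⁻¹ ^ ((n + N) + 1) :=
        (summable_nat_add_iff N).mpr hBsum
      have heq : (∑ n ∈ Finset.range N, g n w) + ∑' n, g (n + N) w = ∑' n, g n w :=
        hsw.sum_add_tsum_nat_add N
      have hrw : (∑ n ∈ Finset.range N, g n w) - ∑' n, g n w = -(∑' n, g (n + N) w) := by
        rw [← heq]; abel
      show ‖(∑ n ∈ Finset.range N, g n w) - ∑' n, g n w‖ < ε
      rw [hrw, norm_neg]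
      calc ‖∑' n, g (n + N) w‖ ≤ ∑' n, ‖g (n + N) w‖ := norm_tsum_le_tsum_norm hnormN
        _ ≤ ∑' n, (‖bar (ω (n + N)) u‖ + (2 : ℝ)⁻¹ ^ ((n + N) + 1)) :=
          Summable.tsum_le_tsum (fun n => hgbound _ w) hnormN hBN
        _ < ε := hN
    · -- value at u is v
      have h1 : ∀ n, g n u = bar (ω n) u := by
        intro n
        show ((f n u : ℝ) : ℂ) • bar (ω n) u = bar (ω n) u
        rw [hf1 n]
        simp
      have hHS : HasSum (fun n => g n u) (∑' n, g n u) := (hgsummable u).hasSum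
      have ht1 : Filter.Tendsto (fun n => ∑ k ∈ Finset.range n, g k u)
          Filter.atTop (nhds (∑' n, g n u)) := hHS.tendsto_sum_nat
      have ht2 : Filter.Tendsto (fun n => ∑ k ∈ Finset.range n, g k u)
          Filter.atTop (nhds v) := by
        have heq2 : (fun n => ∑ k ∈ Finset.range n, g k u) = fun n => v - r n := by
          funext n
          simp only [h1]
          exact hsum n
        rw [heq2]
        have hrnorm : Filter.Tendsto (fun n => ‖r n‖) Filter.atTop (nhds 0) := by
          apply squeeze_zero' (Filter.Eventually.of_forall fun n => norm_nonneg _)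
          · refine Filter.eventually_atTop.mpr ⟨1, fun n hn => ?_⟩
            match n, hn with
            | (m + 1), _ => exact (hrb m).le
          · exact tendsto_pow_atTop_nhds_zero_of_lt_one (by norm_num) (by norm_num)
        have hr0' : Filter.Tendsto r Filter.atTop (nhds 0) :=
          tendsto_zero_iff_norm_tendsto_zero.mpr hrnorm
        have h3 : Filter.Tendsto (fun n => v - r n) Filter.atTop (nhds (v - 0)) :=
          Filter.Tendsto.sub tendsto_const_nhds hr0'
        simpa using h3
      exact tendsto_nhds_unique ht1 ht2
  exact ⟨hzero, hadd, hsmul, hfull, hΩInorm, htrans⟩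
end

section
/- Let A be the Fell C*-algebra of a continuous Hilbert bundle over a locally compact Hausdorff space T, let I ⊆ J be essential ideals of A, and let t ∈ βX^I. Then the assignment ω̄^J(Φ_{JI}(t)) ↦ ω̄^I(t), for ω ∈ Ω_b, is a well-defined isometric linear map on a dense subspace of H^J_{Φ_{JI}(t)} and extends to a unitary Ψ_{JIt}: H^J_{Φ_{JI}(t)} → H^I_t. Moreover, for essential ideals I ⊆ J ⊆ K of A one has Ψ_{KIt} = Ψ_{JIt} ∘ Ψ_{KJ,Φ_{JI}(t)}. -/
noncomputable section

open scoped ComplexOrder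

lemma exists_unitary_extension {E F : Type*} [NormedAddCommGroup E] [InnerProductSpace ℂ E]
    [CompleteSpace E] [NormedAddCommGroup F] [InnerProductSpace ℂ F] [CompleteSpace F]
    {ι : Type*} (a : ι → E) (b : ι → F)
    (hinner : ∀ i j, (inner ℂ (a i) (a j) : ℂ) = inner ℂ (b i) (b j))
    (ha : ∀ (v : E) (ε : ℝ), 0 < ε → ∃ i, ‖a i - v‖ < ε)
    (hb : ∀ (v : F) (ε : ℝ), 0 < ε → ∃ i, ‖b i - v‖ < ε) :
    ∃ Ψ : E ≃ₗᵢ[ℂ] F, ∀ i, Ψ (a i) = b i := by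
  classical
  set LA : (ι →₀ ℂ) →ₗ[ℂ] E := Finsupp.linearCombination ℂ a with hLA
  set LB : (ι →₀ ℂ) →ₗ[ℂ] F := Finsupp.linearCombination ℂ b with hLB
  have hLAs : ∀ i, LA (Finsupp.single i 1) = a i := by
    intro i; simp [hLA, Finsupp.linearCombination_single]
  have hLBs : ∀ i, LB (Finsupp.single i 1) = b i := by
    intro i; simp [hLB, Finsupp.linearCombination_single]
  have key : ∀ c d : ι →₀ ℂ, (inner ℂ (LA c) (LA d) : ℂ) = inner ℂ (LB c) (LB d) := by
    intro c d
    simp only [hLA, hLB, Finsupp.linearCombination_apply, Finsupp.sum, sum_inner, inner_sum,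
      inner_smul_left, inner_smul_right, hinner]
  have hnorm : ∀ c : ι →₀ ℂ, ‖LA c‖ = ‖LB c‖ := by
    intro c
    rw [@norm_eq_sqrt_re_inner ℂ, @norm_eq_sqrt_re_inner ℂ, key]
  have hker : LinearMap.ker LA ≤ LinearMap.ker LB := by
    intro c hc
    rw [LinearMap.mem_ker] at hc ⊢
    have := hnorm c
    rw [hc, norm_zero] at this
    exact norm_eq_zero.mp this.symm
  set g0 : ↥(LinearMap.range LA) →ₗ[ℂ] F :=
    ((LinearMap.ker LA).liftQ LB hker).comp
      (LA.quotKerEquivRange.symm : ↥(LinearMap.range LA) →ₗ[ℂ] _) with hg0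
  have hg0c : ∀ (c : ι →₀ ℂ) (h : LA c ∈ LinearMap.range LA), g0 ⟨LA c, h⟩ = LB c := by
    intro c h
    simp only [hg0, LinearMap.coe_comp, Function.comp_apply, LinearEquiv.coe_coe]
    rw [LinearMap.quotKerEquivRange_symm_apply_image]
    rfl
  have gnorm : ∀ v : ↥(LinearMap.range LA), ‖g0 v‖ = ‖v‖ := by
    rintro ⟨v, c, rfl⟩
    rw [hg0c c ⟨c, rfl⟩]
    exact (hnorm c).symm
  set g : ↥(LinearMap.range LA) →ₗᵢ[ℂ] F := ⟨g0, gnorm⟩ with hg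
  set e : ↥(LinearMap.range LA) →L[ℂ] E := (LinearMap.range LA).subtypeL with he
  have hei : Isometry (e : ↥(LinearMap.range LA) → E) := fun x y => rfl
  have hdense : Dense ((LinearMap.range LA : Submodule ℂ E) : Set E) := by
    rw [Metric.dense_iff]
    intro v ε hε
    obtain ⟨i, hi⟩ := ha v ε hε
    exact ⟨a i, Metric.mem_ball.mpr (by rw [dist_eq_norm]; exact hi),
      ⟨Finsupp.single i 1, hLAs i⟩⟩
  have h_dense : DenseRange (e : ↥(LinearMap.range LA) → E) := by
    have : Set.range (e : ↥(LinearMap.range LA) → E) =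
        ((LinearMap.range LA : Submodule ℂ E) : Set E) := Subtype.range_coe
    rw [DenseRange, this]; exact hdense
  set h : E →L[ℂ] F :=
    ContinuousLinearMap.extend g.toContinuousLinearMap e with hh
  have heq : ∀ x : ↥(LinearMap.range LA), h (x : E) = g x := fun x =>
    ContinuousLinearMap.extend_eq g.toContinuousLinearMap h_dense hei.isUniformInducing x
  have hnorm' : ∀ v : E, ‖h v‖ = ‖v‖ := by
    have : Set.EqOn (fun v => ‖h v‖) (fun v => ‖v‖)
        ((LinearMap.range LA : Submodule ℂ E) : Set E) := by
      intro v hv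
      have := heq ⟨v, hv⟩
      simp only [this]
      exact gnorm ⟨v, hv⟩
    have := Continuous.ext_on hdense (by fun_prop) (by fun_prop) this
    intro v; exact congrFun this v
  set hL : E →ₗᵢ[ℂ] F := ⟨h.toLinearMap, hnorm'⟩ with hhL
  have hLb : ∀ i, hL (a i) = b i := by
    intro i
    have h1 : hL (a i) = g ⟨a i, ⟨Finsupp.single i 1, hLAs i⟩⟩ :=
      heq ⟨a i, ⟨Finsupp.single i 1, hLAs i⟩⟩
    rw [h1]
    have : g ⟨a i, ⟨Finsupp.single i 1, hLAs i⟩⟩ = LB (Finsupp.single i 1) := by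
      have := hg0c (Finsupp.single i 1)
      simp only [hLAs i] at this
      exact this ⟨Finsupp.single i 1, hLAs i⟩
    rw [this, hLBs i]
  have hclosed : IsClosed (Set.range hL) :=
    (hL.isometry.isClosedEmbedding).isClosed_range
  have hdenseF : Dense (Set.range hL) := by
    rw [Metric.dense_iff]
    intro v ε hε
    obtain ⟨i, hi⟩ := hb v ε hε
    exact ⟨b i, Metric.mem_ball.mpr (by rw [dist_eq_norm]; exact hi), ⟨a i, hLb i⟩⟩
  have hsurj : Function.Surjective hL := by
    intro v
    have : Set.range hL = Set.univ := by
      rw [← hclosed.closure_eq, hdenseF.closure_eq]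
    exact Set.range_eq_univ.mp this v
  exact ⟨LinearIsometryEquiv.ofSurjective hL hsurj, fun i => by
    rw [← hLb i]; rfl⟩

end

lemma cast_field_apply {X : Type} {HK : X → Type} (f : ∀ x, HK x) {a b : X} (h : a = b) :
    cast (congrArg HK h) (f a) = f b := by subst h; rfl

lemma cast_norm_sub {X : Type} {HK : X → Type} [∀ x, NormedAddCommGroup (HK x)] {a b : X}
    (h : a = b) (v w : HK a) :
    ‖cast (congrArg HK h) v - cast (congrArg HK h) w‖ = ‖v - w‖ := by subst h; rfl

/-- equation `e:hs iso`.  Let `A` be the Fell C*-algebra of a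
continuous Hilbert bundle over a locally compact Hausdorff space `T`, let
`I ⊆ J` be essential ideals of `A`, and let `t ∈ βX^I`.  Then
`ω̄^J(Φ_{JI}(t)) ↦ ω̄^I(t)` is well defined and isometric on the dense subspace
`{ω̄^J(Φ_{JI}(t)) : ω ∈ Ω_b}` of `H^J_{Φ_{JI}(t)}` and extends to a unitary
`Ψ_{JIt} : H^J_{Φ_{JI}(t)} → H^I_t`; moreover, for essential ideals
`I ⊆ J ⊆ K`, `Ψ_{KIt} = Ψ_{JIt} ∘ Ψ_{KJ,Φ_{JI}(t)}`. -/
theorem exists_connecting_unitaries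
    {T : Type} [TopologicalSpace T] [LocallyCompactSpace T] [T2Space T]
    {H : T → Type} [∀ t, NormedAddCommGroup (H t)] [∀ t, InnerProductSpace ℂ (H t)]
    [∀ t, CompleteSpace (H t)]
    (Ω : Set (∀ t, H t)) (hΩ : IsCtsHilbertBundle Ω)
    (I J K : Set (∀ t, H t →L[ℂ] H t))
    (hI : IsEssentialIdealOf (FellAlgebra Ω) I)
    (hJ : IsEssentialIdealOf (FellAlgebra Ω) J)
    (hK : IsEssentialIdealOf (FellAlgebra Ω) K)
    (hIJ : I ⊆ J) (hJK : J ⊆ K)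
    (hXIJ : (idealSupp I : Set T) ⊆ idealSupp J)
    (hXJK : (idealSupp J : Set T) ⊆ idealSupp K)
    -- Stone–Čech compactifications of `X^I`, `X^J`, `X^K`:
    {βXI βXJ βXK : Type}
    [TopologicalSpace βXI] [CompactSpace βXI] [T2Space βXI]
    [TopologicalSpace βXJ] [CompactSpace βXJ] [T2Space βXJ]
    [TopologicalSpace βXK] [CompactSpace βXK] [T2Space βXK]
    (ιI : idealSupp I → βXI) (hιI : Topology.IsEmbedding ιI) (hιId : DenseRange ιI)
    (ιJ : idealSupp J → βXJ) (hιJ : Topology.IsEmbedding ιJ) (hιJd : DenseRange ιJ)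
    (ιK : idealSupp K → βXK) (hιK : Topology.IsEmbedding ιK) (hιKd : DenseRange ιK)
    -- the fibres over the three compactifications:
    {HI : βXI → Type} [∀ u, NormedAddCommGroup (HI u)]
    [∀ u, InnerProductSpace ℂ (HI u)] [∀ u, CompleteSpace (HI u)]
    {HJ : βXJ → Type} [∀ u, NormedAddCommGroup (HJ u)]
    [∀ u, InnerProductSpace ℂ (HJ u)] [∀ u, CompleteSpace (HJ u)]
    {HK : βXK → Type} [∀ u, NormedAddCommGroup (HK u)]
    [∀ u, InnerProductSpace ℂ (HK u)] [∀ u, CompleteSpace (HK u)]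
    -- the induced fields `ω̄^I`, `ω̄^J`, `ω̄^K`:
    (barI : (∀ t, H t) → ∀ u, HI u) (barJ : (∀ t, H t) → ∀ u, HJ u)
    (barK : (∀ t, H t) → ∀ u, HK u)
    (hbarI_cont : ∀ ω ∈ boundedFields Ω, ∀ ν ∈ boundedFields Ω,
      Continuous fun u => (inner ℂ (barI ω u) (barI ν u) : ℂ))
    (hbarI_eq : ∀ ω ∈ boundedFields Ω, ∀ ν ∈ boundedFields Ω,
      ∀ x : idealSupp I, (inner ℂ (barI ω (ιI x)) (barI ν (ιI x)) : ℂ) =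
        (inner ℂ (ω x.1) (ν x.1) : ℂ))
    (hbarI_dense : ∀ (u : βXI) (v : HI u) (ε : ℝ), 0 < ε →
      ∃ ω ∈ boundedFields Ω, ‖barI ω u - v‖ < ε)
    (hbarJ_cont : ∀ ω ∈ boundedFields Ω, ∀ ν ∈ boundedFields Ω,
      Continuous fun u => (inner ℂ (barJ ω u) (barJ ν u) : ℂ))
    (hbarJ_eq : ∀ ω ∈ boundedFields Ω, ∀ ν ∈ boundedFields Ω,
      ∀ x : idealSupp J, (inner ℂ (barJ ω (ιJ x)) (barJ ν (ιJ x)) : ℂ) =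
        (inner ℂ (ω x.1) (ν x.1) : ℂ))
    (hbarJ_dense : ∀ (u : βXJ) (v : HJ u) (ε : ℝ), 0 < ε →
      ∃ ω ∈ boundedFields Ω, ‖barJ ω u - v‖ < ε)
    (hbarK_cont : ∀ ω ∈ boundedFields Ω, ∀ ν ∈ boundedFields Ω,
      Continuous fun u => (inner ℂ (barK ω u) (barK ν u) : ℂ))
    (hbarK_eq : ∀ ω ∈ boundedFields Ω, ∀ ν ∈ boundedFields Ω,
      ∀ x : idealSupp K, (inner ℂ (barK ω (ιK x)) (barK ν (ιK x)) : ℂ) =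
        (inner ℂ (ω x.1) (ν x.1) : ℂ))
    (hbarK_dense : ∀ (u : βXK) (v : HK u) (ε : ℝ), 0 < ε →
      ∃ ω ∈ boundedFields Ω, ‖barK ω u - v‖ < ε)
    -- the connecting maps `Φ_{JI}`, `Φ_{KJ}`, `Φ_{KI}`:
    (ΦJI : βXI → βXJ) (hΦJI : Continuous ΦJI)
    (hΦJIι : ∀ x : idealSupp I, ΦJI (ιI x) = ιJ (Set.inclusion hXIJ x))
    (ΦKJ : βXJ → βXK) (hΦKJ : Continuous ΦKJ)
    (hΦKJι : ∀ x : idealSupp J, ΦKJ (ιJ x) = ιK (Set.inclusion hXJK x))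
    (ΦKI : βXI → βXK) (hΦKI : Continuous ΦKI)
    (hΦKIι : ∀ x : idealSupp I,
      ΦKI (ιI x) = ιK (Set.inclusion (hXIJ.trans hXJK) x))
    (hΦcomp : ∀ t : βXI, ΦKI t = ΦKJ (ΦJI t)) :
    -- (1): well-definedness and isometry on the dense subspace `E^J(Φ_{JI}t)`:
    (∀ t : βXI, ∀ ω ∈ boundedFields Ω, ∀ ν ∈ boundedFields Ω,
      ‖barJ ω (ΦJI t) - barJ ν (ΦJI t)‖ = ‖barI ω t - barI ν t‖) ∧
    -- (2): existence of the unitary extension `Ψ_{JIt}`: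
    (∀ t : βXI, ∃ Ψ : HJ (ΦJI t) ≃ₗᵢ[ℂ] HI t,
      ∀ ω ∈ boundedFields Ω, Ψ (barJ ω (ΦJI t)) = barI ω t) ∧
    -- (3): the cocycle identity `Ψ_{KIt} = Ψ_{JIt} ∘ Ψ_{KJ,Φ_{JI}(t)}` for any
    -- unitaries with the characterising property:
    (∀ (ΨJI : ∀ t : βXI, HJ (ΦJI t) ≃ₗᵢ[ℂ] HI t)
      (ΨKJ : ∀ r : βXJ, HK (ΦKJ r) ≃ₗᵢ[ℂ] HJ r)
      (ΨKI : ∀ t : βXI, HK (ΦKI t) ≃ₗᵢ[ℂ] HI t),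
      (∀ (t : βXI), ∀ ω ∈ boundedFields Ω, ΨJI t (barJ ω (ΦJI t)) = barI ω t) →
      (∀ (r : βXJ), ∀ ω ∈ boundedFields Ω, ΨKJ r (barK ω (ΦKJ r)) = barJ ω r) →
      (∀ (t : βXI), ∀ ω ∈ boundedFields Ω, ΨKI t (barK ω (ΦKI t)) = barI ω t) →
      ∀ (t : βXI) (v : HK (ΦKI t)),
        ΨKI t v = ΨJI t (ΨKJ (ΦJI t) (cast (congrArg HK (hΦcomp t)) v))) := by
  have keyJI : ∀ ω ∈ boundedFields Ω, ∀ ν ∈ boundedFields Ω, ∀ t : βXI,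
      (inner ℂ (barJ ω (ΦJI t)) (barJ ν (ΦJI t)) : ℂ) = inner ℂ (barI ω t) (barI ν t) := by
    intro ω hω ν hν
    have hc1 : Continuous fun t : βXI => (inner ℂ (barJ ω (ΦJI t)) (barJ ν (ΦJI t)) : ℂ) :=
      (hbarJ_cont ω hω ν hν).comp hΦJI
    have hc2 := hbarI_cont ω hω ν hν
    have heqon : Set.EqOn (fun t : βXI => (inner ℂ (barJ ω (ΦJI t)) (barJ ν (ΦJI t)) : ℂ))
        (fun t => (inner ℂ (barI ω t) (barI ν t) : ℂ)) (Set.range ιI) := by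
      rintro _ ⟨x, rfl⟩
      simp only
      rw [hΦJIι x, hbarJ_eq ω hω ν hν (Set.inclusion hXIJ x), hbarI_eq ω hω ν hν x]
    have := Continuous.ext_on hιId hc1 hc2 heqon
    intro t; exact congrFun this t
  refine ⟨?_, ?_, ?_⟩
  · -- (1)
    intro t ω hω ν hν
    have h2 : ‖barJ ω (ΦJI t) - barJ ν (ΦJI t)‖ ^ 2 = ‖barI ω t - barI ν t‖ ^ 2 := by
      rw [@norm_sub_sq ℂ, @norm_sub_sq ℂ,
        ← @inner_self_eq_norm_sq ℂ _ _ _ _ (barJ ω (ΦJI t)),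
        ← @inner_self_eq_norm_sq ℂ _ _ _ _ (barJ ν (ΦJI t)),
        ← @inner_self_eq_norm_sq ℂ _ _ _ _ (barI ω t),
        ← @inner_self_eq_norm_sq ℂ _ _ _ _ (barI ν t),
        keyJI ω hω ω hω t, keyJI ω hω ν hν t, keyJI ν hν ν hν t]
    have := congrArg Real.sqrt h2
    simpa [Real.sqrt_sq, norm_nonneg] using this
  · -- (2)
    intro t
    obtain ⟨Ψ, hΨ⟩ := exists_unitary_extension (ι := ↥(boundedFields Ω))
      (fun ω => barJ ω.1 (ΦJI t)) (fun ω => barI ω.1 t)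
      (fun i j => keyJI i.1 i.2 j.1 j.2 t)
      (fun v ε hε => by
        obtain ⟨ω, hω, h⟩ := hbarJ_dense (ΦJI t) v ε hε; exact ⟨⟨ω, hω⟩, h⟩)
      (fun v ε hε => by
        obtain ⟨ω, hω, h⟩ := hbarI_dense t v ε hε; exact ⟨⟨ω, hω⟩, h⟩)
    exact ⟨Ψ, fun ω hω => hΨ ⟨ω, hω⟩⟩
  · -- (3)
    intro ΨJI ΨKJ ΨKI h1 h2 h3 t v
    set c : HK (ΦKI t) → HK (ΦKJ (ΦJI t)) := cast (congrArg HK (hΦcomp t)) with hc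
    have hkey : ∀ ε : ℝ, 0 < ε → ‖ΨKI t v - ΨJI t (ΨKJ (ΦJI t) (c v))‖ ≤ ε := by
      intro ε hε
      obtain ⟨ω, hω, hωv⟩ := hbarK_dense (ΦKI t) v (ε / 2) (by linarith)
      set w := barK ω (ΦKI t) with hw
      have hcw : c w = barK ω (ΦKJ (ΦJI t)) := cast_field_apply (fun x => barK ω x) (hΦcomp t)
      have hmid : ΨKI t w = ΨJI t (ΨKJ (ΦJI t) (c w)) := by
        rw [h3 t ω hω, hcw, h2 (ΦJI t) ω hω, h1 t ω hω]
      have hsplit : ΨKI t v - ΨJI t (ΨKJ (ΦJI t) (c v)) =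
          (ΨKI t v - ΨKI t w) +
            (ΨJI t (ΨKJ (ΦJI t) (c w)) - ΨJI t (ΨKJ (ΦJI t) (c v))) := by
        rw [← hmid]; abel
      have hA : ‖ΨKI t v - ΨKI t w‖ = ‖v - w‖ := by
        rw [← map_sub, (ΨKI t).norm_map]
      have hB : ‖ΨJI t (ΨKJ (ΦJI t) (c w)) - ΨJI t (ΨKJ (ΦJI t) (c v))‖ = ‖w - v‖ := by
        rw [← map_sub, (ΨJI t).norm_map, ← map_sub, (ΨKJ (ΦJI t)).norm_map]
        exact cast_norm_sub (hΦcomp t) w v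
      rw [hsplit]
      refine le_trans (norm_add_le _ _) ?_
      rw [hA, hB]
      have h5 : ‖v - w‖ < ε / 2 := by rw [norm_sub_rev]; exact hωv
      linarith
    have hle : ‖ΨKI t v - ΨJI t (ΨKJ (ΦJI t) (c v))‖ ≤ 0 :=
      le_of_forall_pos_le_add fun ε hε => by rw [zero_add]; exact hkey ε hε
    have := norm_le_zero_iff.mp hle
    exact sub_eq_zero.mp this
end

section
/- Let A be the Fell C*-algebra of a continuous Hilbert bundle over a locally compact Hausdorff space T and let I ⊆ J be essential ideals of A. For ν ∈ Ω^J define λ_{JI}ν on βX^I by (λ_{JI}ν)(t) = Ψ_{JIt}(ν(Φ_{JI}(t))). Then λ_{JI}ν ∈ Ω^I, and λ_{JI}: Ω^J → Ω^I is a linear isometry with respect to the supremum norms (in particular sup_{t∈βX^I} ‖(λ_{JI}ν)(t)‖ = sup_{r∈βX^J} ‖ν(r)‖). Moreover λ_{II} = id and λ_{KI} = λ_{JI} ∘ λ_{KJ} whenever I ⊆ J ⊆ K are essential ideals, so that ({Ω^I}, {λ_{JI}}) is a direct system of normed spaces of bounded vector fields and linear isometries. -/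
noncomputable section AuxLambda

/-- Cast between fibers along equal base points, as a linear isometry equiv. -/
def castLIE {X : Type*} {G : X → Type*} [∀ x, NormedAddCommGroup (G x)]
    [∀ x, InnerProductSpace ℂ (G x)] {a b : X} (h : a = b) : G a ≃ₗᵢ[ℂ] G b :=
  h ▸ LinearIsometryEquiv.refl ℂ (G a)

lemma castLIE_apply {X : Type*} {G : X → Type*} [∀ x, NormedAddCommGroup (G x)]
    [∀ x, InnerProductSpace ℂ (G x)] {a b : X} (h : a = b) (ν : ∀ x, G x) :
    castLIE (G := G) h (ν a) = ν b := by subst h; rfl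

lemma dense_of_approx {E : Type*} [NormedAddCommGroup E] {s : Set E}
    (h : ∀ v : E, ∀ ε : ℝ, 0 < ε → ∃ w ∈ s, ‖w - v‖ < ε) : Dense s := by
  intro v
  rw [Metric.mem_closure_iff]
  intro ε hε
  obtain ⟨w, hw, hlt⟩ := h v ε hε
  exact ⟨w, hw, by rwa [dist_eq_norm, norm_sub_rev]⟩

end AuxLambda

/-- Proposition `systems1`(ii).  With `I ⊆ J ⊆ K` essential
ideals of the Fell algebra `A`, the maps `λ_{JI}ν = (t ↦ Ψ_{JIt}(ν(Φ_{JI}t)))`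
carry `Ω^J` into `Ω^I`, are linear isometries for the supremum norms, satisfy
`λ_{II} = id` and `λ_{KI} = λ_{JI} ∘ λ_{KJ}`; hence `({Ω^I}, {λ_{JI}})` is a
direct system of normed spaces of bounded vector fields and linear isometries. -/
theorem lambda_direct_system
    {T : Type} [TopologicalSpace T] [LocallyCompactSpace T] [T2Space T]
    {H : T → Type} [∀ t, NormedAddCommGroup (H t)] [∀ t, InnerProductSpace ℂ (H t)]
    [∀ t, CompleteSpace (H t)]
    (Ω : Set (∀ t, H t)) (hΩ : IsCtsHilbertBundle Ω)
    (I J K : Set (∀ t, H t →L[ℂ] H t))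
    (hI : IsEssentialIdealOf (FellAlgebra Ω) I)
    (hJ : IsEssentialIdealOf (FellAlgebra Ω) J)
    (hK : IsEssentialIdealOf (FellAlgebra Ω) K)
    (hIJ : I ⊆ J) (hJK : J ⊆ K)
    (hXIJ : (idealSupp I : Set T) ⊆ idealSupp J)
    (hXJK : (idealSupp J : Set T) ⊆ idealSupp K)
    {βXI βXJ βXK : Type}
    [TopologicalSpace βXI] [CompactSpace βXI] [T2Space βXI]
    [TopologicalSpace βXJ] [CompactSpace βXJ] [T2Space βXJ]
    [TopologicalSpace βXK] [CompactSpace βXK] [T2Space βXK]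
    (ιI : idealSupp I → βXI) (hιI : Topology.IsEmbedding ιI) (hιId : DenseRange ιI)
    (ιJ : idealSupp J → βXJ) (hιJ : Topology.IsEmbedding ιJ) (hιJd : DenseRange ιJ)
    (ιK : idealSupp K → βXK) (hιK : Topology.IsEmbedding ιK) (hιKd : DenseRange ιK)
    {HI : βXI → Type} [∀ u, NormedAddCommGroup (HI u)]
    [∀ u, InnerProductSpace ℂ (HI u)] [∀ u, CompleteSpace (HI u)]
    {HJ : βXJ → Type} [∀ u, NormedAddCommGroup (HJ u)]
    [∀ u, InnerProductSpace ℂ (HJ u)] [∀ u, CompleteSpace (HJ u)]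
    {HK : βXK → Type} [∀ u, NormedAddCommGroup (HK u)]
    [∀ u, InnerProductSpace ℂ (HK u)] [∀ u, CompleteSpace (HK u)]
    (barI : (∀ t, H t) → ∀ u, HI u) (barJ : (∀ t, H t) → ∀ u, HJ u)
    (barK : (∀ t, H t) → ∀ u, HK u)
    (hbarI_dense : ∀ (u : βXI) (v : HI u) (ε : ℝ), 0 < ε →
      ∃ ω ∈ boundedFields Ω, ‖barI ω u - v‖ < ε)
    (hbarJ_dense : ∀ (u : βXJ) (v : HJ u) (ε : ℝ), 0 < ε →
      ∃ ω ∈ boundedFields Ω, ‖barJ ω u - v‖ < ε)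
    (hbarK_dense : ∀ (u : βXK) (v : HK u) (ε : ℝ), 0 < ε →
      ∃ ω ∈ boundedFields Ω, ‖barK ω u - v‖ < ε)
    -- the connecting maps `Φ_{JI}`, `Φ_{KJ}`, `Φ_{KI}` (continuous surjections):
    (ΦJI : βXI → βXJ) (hΦJI : Continuous ΦJI) (hΦJIsurj : Function.Surjective ΦJI)
    (hΦJIι : ∀ x : idealSupp I, ΦJI (ιI x) = ιJ (Set.inclusion hXIJ x))
    (ΦKJ : βXJ → βXK) (hΦKJ : Continuous ΦKJ) (hΦKJsurj : Function.Surjective ΦKJ)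
    (hΦKJι : ∀ x : idealSupp J, ΦKJ (ιJ x) = ιK (Set.inclusion hXJK x))
    (ΦKI : βXI → βXK) (hΦKI : Continuous ΦKI) (hΦKIsurj : Function.Surjective ΦKI)
    (hΦKIι : ∀ x : idealSupp I,
      ΦKI (ιI x) = ιK (Set.inclusion (hXIJ.trans hXJK) x))
    (hΦcomp : ∀ t : βXI, ΦKI t = ΦKJ (ΦJI t))
    -- the unitaries `Ψ_{JIt}`, `Ψ_{KJr}`, `Ψ_{KIt}`:
    (ΨJI : ∀ t : βXI, HJ (ΦJI t) ≃ₗᵢ[ℂ] HI t)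
    (ΨKJ : ∀ r : βXJ, HK (ΦKJ r) ≃ₗᵢ[ℂ] HJ r)
    (ΨKI : ∀ t : βXI, HK (ΦKI t) ≃ₗᵢ[ℂ] HI t)
    (hΨJI : ∀ (t : βXI), ∀ ω ∈ boundedFields Ω, ΨJI t (barJ ω (ΦJI t)) = barI ω t)
    (hΨKJ : ∀ (r : βXJ), ∀ ω ∈ boundedFields Ω, ΨKJ r (barK ω (ΦKJ r)) = barJ ω r)
    (hΨKI : ∀ (t : βXI), ∀ ω ∈ boundedFields Ω,
      ΨKI t (barK ω (ΦKI t)) = barI ω t) :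
    -- `λ_{JI}` maps `Ω^J` into `Ω^I` …
    (∀ ν ∈ {ν : ∀ u, HJ u | LocUnifApprox (barJ '' boundedFields Ω) ν},
      (fun t => ΨJI t (ν (ΦJI t))) ∈
        {ν : ∀ u, HI u | LocUnifApprox (barI '' boundedFields Ω) ν}) ∧
    -- … is linear …
    (∀ ν μ : ∀ u, HJ u, (fun t => ΨJI t ((ν + μ) (ΦJI t))) =
      (fun t => ΨJI t (ν (ΦJI t))) + fun t => ΨJI t (μ (ΦJI t))) ∧
    (∀ (c : ℂ) (ν : ∀ u, HJ u), (fun t => ΨJI t ((c • ν) (ΦJI t))) =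
      c • fun t => ΨJI t (ν (ΦJI t))) ∧
    -- … and isometric for the supremum norms:
    (∀ ν ∈ {ν : ∀ u, HJ u | LocUnifApprox (barJ '' boundedFields Ω) ν},
      (⨆ t : βXI, ‖ΨJI t (ν (ΦJI t))‖) = ⨆ r : βXJ, ‖ν r‖) ∧
    -- `λ_{II} = id`:
    (∀ (ΦII : βXI → βXI), Continuous ΦII → (∀ x : idealSupp I, ΦII (ιI x) = ιI x) →
      ∀ (ΨII : ∀ t : βXI, HI (ΦII t) ≃ₗᵢ[ℂ] HI t),
      (∀ (t : βXI), ∀ ω ∈ boundedFields Ω, ΨII t (barI ω (ΦII t)) = barI ω t) →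
      ∀ ν ∈ {ν : ∀ u, HI u | LocUnifApprox (barI '' boundedFields Ω) ν},
        (fun t => ΨII t (ν (ΦII t))) = ν) ∧
    -- `λ_{KI} = λ_{JI} ∘ λ_{KJ}`:
    (∀ ν ∈ {ν : ∀ u, HK u | LocUnifApprox (barK '' boundedFields Ω) ν},
      (fun t => ΨKI t (ν (ΦKI t))) =
        fun t => ΨJI t (ΨKJ (ΦJI t) (ν (ΦKJ (ΦJI t))))) := by
  -- dense images of bounded fields in each fiber
  have hdI : ∀ u : βXI, Dense {v : HI u | ∃ ω ∈ boundedFields Ω, barI ω u = v} := by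
    intro u
    apply dense_of_approx
    intro v ε hε
    obtain ⟨ω, hω, hlt⟩ := hbarI_dense u v ε hε
    exact ⟨barI ω u, ⟨ω, hω, rfl⟩, hlt⟩
  have hdK : ∀ u : βXK, Dense {v : HK u | ∃ ω ∈ boundedFields Ω, barK ω u = v} := by
    intro u
    apply dense_of_approx
    intro v ε hε
    obtain ⟨ω, hω, hlt⟩ := hbarK_dense u v ε hε
    exact ⟨barK ω u, ⟨ω, hω, rfl⟩, hlt⟩
  refine ⟨?_, ?_, ?_, ?_, ?_, ?_⟩
  · -- maps Ω^J into Ω^I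
    intro ν hν t₀ ε hε
    obtain ⟨U, hUo, hU₀, ω', ⟨ω, hω, rfl⟩, hUapp⟩ := hν (ΦJI t₀) ε hε
    refine ⟨ΦJI ⁻¹' U, hUo.preimage hΦJI, hU₀, barI ω, ⟨ω, hω, rfl⟩, ?_⟩
    intro t ht
    have : barI ω t - ΨJI t (ν (ΦJI t)) = ΨJI t (barJ ω (ΦJI t) - ν (ΦJI t)) := by
      rw [map_sub, hΨJI t ω hω]
    rw [this, LinearIsometryEquiv.norm_map]
    exact hUapp (ΦJI t) ht
  · -- additive
    intro ν μ
    funext t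
    simp [map_add]
  · -- homogeneous
    intro c ν
    funext t
    simp [map_smul]
  · -- isometric
    intro ν _
    simp only [LinearIsometryEquiv.norm_map]
    exact hΦJIsurj.iSup_comp fun r => ‖ν r‖
  · -- λ_{II} = id
    intro ΦII hΦII hΦIIι ΨII hΨII ν _
    have hid : ΦII = id := by
      apply hιId.equalizer hΦII continuous_id
      funext x
      simp [hΦIIι x]
    subst hid
    funext t
    have heq : (fun v : HI t => (ΨII t v : HI t)) = fun v => v := by
      refine Continuous.ext_on (hdI t) (ΨII t).continuous continuous_id ?_
      rintro v ⟨ω, hω, rfl⟩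
      exact hΨII t ω hω
    exact congrFun heq (ν t)
  · -- λ_{KI} = λ_{JI} ∘ λ_{KJ}
    intro ν _
    funext t
    have h := hΦcomp t
    have hcast : ν (ΦKJ (ΦJI t)) = castLIE (G := HK) h (ν (ΦKI t)) :=
      (castLIE_apply h ν).symm
    rw [hcast]
    have heq : (fun v : HK (ΦKI t) => (ΨKI t v : HI t)) =
        fun v => ΨJI t (ΨKJ (ΦJI t) (castLIE (G := HK) h v)) := by
      refine Continuous.ext_on (hdK (ΦKI t)) (ΨKI t).continuous
        ((ΨJI t).continuous.comp ((ΨKJ (ΦJI t)).continuous.comp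
          (castLIE (G := HK) h).continuous)) ?_
      rintro v ⟨ω, hω, rfl⟩
      dsimp only
      rw [hΨKI t ω hω, castLIE_apply h (barK ω), hΨKJ (ΦJI t) ω hω, hΨJI t ω hω]
    exact congrFun heq (ν (ΦKI t))
end

section
/- Let A be the Fell C*-algebra of a continuous Hilbert bundle over a locally compact Hausdorff space T. Then (Δ, {H_s^Δ}_{s∈Δ}, Ω^Δ) is a continuous Hilbert bundle over the compact Hausdorff space Δ = lim← βX^I; in particular Ω^Δ is a C(Δ)-module under the pointwise action and is closed under local uniform approximation. -/
noncomputable section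

variable {T : Type} [TopologicalSpace T] {H : T → Type}
  [∀ t, NormedAddCommGroup (H t)] [∀ t, InnerProductSpace ℂ (H t)]
  [∀ t, CompleteSpace (H t)]

/-- The index set `I_ess(A)` of essential ideals of the Fell algebra of `Ω`
(directed by reverse inclusion). -/
def EssIdeal (Ω : Set (∀ t, H t)) : Type _ :=
  {I : Set (∀ t, H t →L[ℂ] H t) // IsEssentialIdealOf (FellAlgebra Ω) I}

/-- `Ω^I`: the local uniform limits of the induced fields `E^I = bar '' Ω_b`. -/
def OmegaExt {βX : Type} {HI : βX → Type} [TopologicalSpace βX]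
    [∀ u, NormedAddCommGroup (HI u)]
    (Ω : Set (∀ t, H t)) (bar : (∀ t, H t) → ∀ u, HI u) : Set (∀ u, HI u) :=
  {ν | LocUnifApprox (bar '' boundedFields Ω) ν}

end

section AuxLemmas

variable {X : Type*} [TopologicalSpace X] {E : X → Type*} [∀ x, NormedAddCommGroup (E x)]

theorem locUnifApprox_of_mem {S : Set (∀ x, E x)} {ξ : ∀ x, E x} (h : ξ ∈ S) :
    LocUnifApprox S ξ := by
  intro t₀ ε hε
  exact ⟨Set.univ, isOpen_univ, trivial, ξ, h, fun t _ => by simpa using hε⟩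

theorem locUnifApprox_trans {S S' : Set (∀ x, E x)}
    (h : ∀ μ ∈ S, LocUnifApprox S' μ) {ξ : ∀ x, E x} (hξ : LocUnifApprox S ξ) :
    LocUnifApprox S' ξ := by
  intro t₀ ε hε
  obtain ⟨U, hU, htU, μ, hμS, hμ⟩ := hξ t₀ (ε / 2) (by linarith)
  obtain ⟨V, hV, htV, h', hh'S, hh'⟩ := h μ hμS t₀ (ε / 2) (by linarith)
  refine ⟨U ∩ V, hU.inter hV, ⟨htU, htV⟩, h', hh'S, fun t ht => ?_⟩
  have h1 := hμ t ht.1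
  have h2 := hh' t ht.2
  calc ‖h' t - ξ t‖ = ‖(h' t - μ t) + (μ t - ξ t)‖ := by rw [sub_add_sub_cancel]
    _ ≤ ‖h' t - μ t‖ + ‖μ t - ξ t‖ := norm_add_le _ _
    _ < ε := by linarith

theorem locUnifApprox_norm_continuous {S : Set (∀ x, E x)}
    (hS : ∀ h ∈ S, Continuous fun x => ‖h x‖) {ξ : ∀ x, E x}
    (hξ : LocUnifApprox S ξ) : Continuous fun x => ‖ξ x‖ := by
  rw [continuous_iff_continuousAt]
  intro x₀
  rw [ContinuousAt, Metric.tendsto_nhds]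
  intro ε hε
  obtain ⟨U, hU, hx₀, h, hhS, hh⟩ := hξ x₀ (ε / 3) (by linarith)
  have hc : ContinuousAt (fun x => ‖h x‖) x₀ := (hS h hhS).continuousAt
  have h1 : ∀ᶠ x in nhds x₀, dist ‖h x‖ ‖h x₀‖ < ε / 3 :=
    Metric.tendsto_nhds.mp hc (ε / 3) (by linarith)
  filter_upwards [h1, hU.mem_nhds hx₀] with x hx hxU
  have a1 : ‖h x - ξ x‖ < ε / 3 := hh x hxU
  have a2 : ‖h x₀ - ξ x₀‖ < ε / 3 := hh x₀ hx₀
  have b1 : |‖ξ x‖ - ‖h x‖| ≤ ‖ξ x - h x‖ := abs_norm_sub_norm_le _ _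
  have b2 : |‖h x₀‖ - ‖ξ x₀‖| ≤ ‖h x₀ - ξ x₀‖ := abs_norm_sub_norm_le _ _
  have e1 : ‖ξ x - h x‖ = ‖h x - ξ x‖ := norm_sub_rev _ _
  rw [Real.dist_eq] at hx ⊢
  have tri1 : |‖ξ x‖ - ‖ξ x₀‖| ≤ |‖ξ x‖ - ‖h x‖| + |‖h x‖ - ‖ξ x₀‖| := abs_sub_le _ _ _
  have tri2 : |‖h x‖ - ‖ξ x₀‖| ≤ |‖h x‖ - ‖h x₀‖| + |‖h x₀‖ - ‖ξ x₀‖| := abs_sub_le _ _ _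
  linarith

end AuxLemmas

set_option maxHeartbeats 2000000 in
/-- Let `A` be the Fell C*-algebra of a continuous Hilbert
bundle over a locally compact Hausdorff space `T`.  With `Δ = lim← βX^I` the
inverse limit of the Stone–Čech compactifications `βX^I` over the essential
ideals of `A` (a compact Hausdorff space with canonical surjections
`Φ_I : Δ → βX^I`), fibres `H_s^Δ = lim→ H^I_{Φ_I(s)}` (canonical unitaries
`Ψ_{I,s}`), and `Ω^Δ` the bounded vector fields on `Δ` which are local uniform
limits of the fields `ν∘Φ_I` (`ν ∈ Ω^I`), the triple `(Δ, {H_s^Δ}, Ω^Δ)` is a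
continuous Hilbert bundle. -/
theorem limit_bundle_isCtsHilbertBundle
    {T : Type} [TopologicalSpace T] [LocallyCompactSpace T] [T2Space T]
    {H : T → Type} [∀ t, NormedAddCommGroup (H t)] [∀ t, InnerProductSpace ℂ (H t)]
    [∀ t, CompleteSpace (H t)]
    (Ω : Set (∀ t, H t)) (hΩ : IsCtsHilbertBundle Ω)
    -- Stone–Čech data over every essential ideal:
    {βX : EssIdeal Ω → Type} [∀ I, TopologicalSpace (βX I)]
    [∀ I, CompactSpace (βX I)] [∀ I, T2Space (βX I)]
    (ι : ∀ I : EssIdeal Ω, idealSupp I.1 → βX I)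
    (hι : ∀ I, Topology.IsEmbedding (ι I)) (hιd : ∀ I, DenseRange (ι I))
    {HI : ∀ I : EssIdeal Ω, βX I → Type}
    [∀ I u, NormedAddCommGroup (HI I u)] [∀ I u, InnerProductSpace ℂ (HI I u)]
    [∀ I u, CompleteSpace (HI I u)]
    (bar : ∀ I : EssIdeal Ω, (∀ t, H t) → ∀ u, HI I u)
    (hbar_add : ∀ I, ∀ ω ∈ boundedFields Ω, ∀ ν ∈ boundedFields Ω,
      bar I (ω + ν) = bar I ω + bar I ν)
    (hbar_smul : ∀ I, ∀ (c : ℂ), ∀ ω ∈ boundedFields Ω, bar I (c • ω) = c • bar I ω)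
    (hbar_inner_cont : ∀ I, ∀ ω ∈ boundedFields Ω, ∀ ν ∈ boundedFields Ω,
      Continuous fun u => (inner ℂ (bar I ω u) (bar I ν u) : ℂ))
    (hbar_inner_eq : ∀ I, ∀ ω ∈ boundedFields Ω, ∀ ν ∈ boundedFields Ω,
      ∀ x : idealSupp I.1, (inner ℂ (bar I ω (ι I x)) (bar I ν (ι I x)) : ℂ) =
        (inner ℂ (ω x.1) (ν x.1) : ℂ))
    (hbar_dense : ∀ I (u : βX I) (v : HI I u) (ε : ℝ), 0 < ε →
      ∃ ω ∈ boundedFields Ω, ‖bar I ω u - v‖ < ε)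
    -- the connecting maps `Φ_{JI} : βX^I → βX^J` (for `I ⊆ J`):
    (hXmono : ∀ I J : EssIdeal Ω, I.1 ⊆ J.1 →
      (idealSupp I.1 : Set T) ⊆ idealSupp J.1)
    (Φmap : ∀ I J : EssIdeal Ω, I.1 ⊆ J.1 → βX I → βX J)
    (hΦmap_cont : ∀ I J h, Continuous (Φmap I J h))
    (hΦmap_ι : ∀ I J (h : I.1 ⊆ J.1) (x : idealSupp I.1),
      Φmap I J h (ι I x) = ι J (Set.inclusion (hXmono I J h) x))
    -- the inverse limit `Δ = lim← βX^I` with canonical surjections `Φ_I`: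
    {Δ : Type} [TopologicalSpace Δ] [CompactSpace Δ] [T2Space Δ]
    (Φ : ∀ I : EssIdeal Ω, Δ → βX I)
    (hΦcont : ∀ I, Continuous (Φ I)) (hΦsurj : ∀ I, Function.Surjective (Φ I))
    (hΦcompat : ∀ I J (h : I.1 ⊆ J.1) (s : Δ), Φmap I J h (Φ I s) = Φ J s)
    (hΦsep : ∀ s s' : Δ, (∀ I, Φ I s = Φ I s') → s = s')
    (hΦlim : ∀ x : ∀ I : EssIdeal Ω, βX I,
      (∀ I J (h : I.1 ⊆ J.1), Φmap I J h (x I) = x J) → ∃ s : Δ, ∀ I, Φ I s = x I)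
    (hbasis : ∀ W : Set Δ, IsOpen W → ∀ s ∈ W, ∃ (I : EssIdeal Ω) (V : Set (βX I)),
      IsOpen V ∧ s ∈ Φ I ⁻¹' V ∧ Φ I ⁻¹' V ⊆ W)
    -- the limit fibres `H_s^Δ` with canonical unitaries `Ψ_{I,s}`:
    {HΔ : Δ → Type} [∀ s, NormedAddCommGroup (HΔ s)]
    [∀ s, InnerProductSpace ℂ (HΔ s)] [∀ s, CompleteSpace (HΔ s)]
    (Ψ : ∀ (I : EssIdeal Ω) (s : Δ), HI I (Φ I s) ≃ₗᵢ[ℂ] HΔ s)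
    (hΨcompat : ∀ I J (h : I.1 ⊆ J.1) (s : Δ), ∀ ω ∈ boundedFields Ω,
      Ψ I s (bar I ω (Φ I s)) = Ψ J s (bar J ω (Φ J s)))
    (hΨdense : ∀ (s : Δ) (v : HΔ s) (ε : ℝ), 0 < ε →
      ∃ (I : EssIdeal Ω) (ν : ∀ u, HI I u), ν ∈ OmegaExt Ω (bar I) ∧
        ‖Ψ I s (ν (Φ I s)) - v‖ < ε) :
    -- conclusion: `(Δ, {H_s^Δ}, Ω^Δ)` is a continuous Hilbert bundle
    IsCtsHilbertBundle
      {ξ : ∀ s, HΔ s | (∃ M : ℝ, ∀ s, ‖ξ s‖ ≤ M) ∧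
        LocUnifApprox
          {μ : ∀ s, HΔ s | ∃ (I : EssIdeal Ω) (ν : ∀ u, HI I u),
            ν ∈ OmegaExt Ω (bar I) ∧ μ = fun s => Ψ I s (ν (Φ I s))} ξ} := by
  classical
  set Lam : Set (∀ s, HΔ s) :=
    {μ : ∀ s, HΔ s | ∃ (I : EssIdeal Ω) (ν : ∀ u, HI I u),
      ν ∈ OmegaExt Ω (bar I) ∧ μ = fun s => Ψ I s (ν (Φ I s))} with hLamDef
  set ΩΔ : Set (∀ s, HΔ s) :=
    {ξ : ∀ s, HΔ s | (∃ M : ℝ, ∀ s, ‖ξ s‖ ≤ M) ∧ LocUnifApprox Lam ξ} with hΩΔDef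
  -- intersections of essential ideals are essential
  have ideal_inter : ∀ {I J : Set (∀ t, H t →L[ℂ] H t)},
      IsIdealOf (FellAlgebra Ω) I → IsIdealOf (FellAlgebra Ω) J →
      IsIdealOf (FellAlgebra Ω) (I ∩ J) := by
    intro I J hI hJ
    refine ⟨fun a ha => hI.subset ha.1, ⟨hI.zero_mem, hJ.zero_mem⟩,
      fun a ha b hb => ⟨hI.add_mem a ha.1 b hb.1, hJ.add_mem a ha.2 b hb.2⟩,
      fun c a ha => ⟨hI.smul_mem c a ha.1, hJ.smul_mem c a ha.2⟩,
      fun a ha => ⟨hI.star_mem a ha.1, hJ.star_mem a ha.2⟩,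
      fun a ha b hb => ⟨hI.mul_mem_left a ha b hb.1, hJ.mul_mem_left a ha b hb.2⟩,
      fun a ha b hb => ⟨hI.mul_mem_right a ha.1 b hb, hJ.mul_mem_right a ha.2 b hb⟩,
      fun a ha hap => ⟨hI.norm_closed a ha fun ε hε => ?_, hJ.norm_closed a ha fun ε hε => ?_⟩⟩
    · obtain ⟨b, hb, hb2⟩ := hap ε hε; exact ⟨b, hb.1, hb2⟩
    · obtain ⟨b, hb, hb2⟩ := hap ε hε; exact ⟨b, hb.2, hb2⟩
  have ess_inter : ∀ I J : EssIdeal Ω, ∃ K : EssIdeal Ω, K.1 ⊆ I.1 ∧ K.1 ⊆ J.1 := by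
    intro I J
    have hK : IsEssentialIdealOf (FellAlgebra Ω) (I.1 ∩ J.1) := by
      refine ⟨ideal_inter I.2.1 J.2.1, fun J' hJ' hne => ?_⟩
      obtain ⟨c, hcJ, hcJ', hc0⟩ := J.2.2 J' hJ' hne
      obtain ⟨d, hdI, hd, hd0⟩ := I.2.2 (J.1 ∩ J') (ideal_inter J.2.1 hJ') ⟨c, ⟨hcJ, hcJ'⟩, hc0⟩
      exact ⟨d, ⟨hdI, hd.1⟩, hd.2, hd0⟩
    exact ⟨⟨I.1 ∩ J.1, hK⟩, Set.inter_subset_left, Set.inter_subset_right⟩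
  -- the "hat" fields s ↦ Ψ_I,s (ω̄^I (Φ_I s)) do not depend on I
  have hat_indep : ∀ (I J : EssIdeal Ω) (ω : ∀ t, H t), ω ∈ boundedFields Ω → ∀ s : Δ,
      Ψ I s (bar I ω (Φ I s)) = Ψ J s (bar J ω (Φ J s)) := by
    intro I J ω hω s
    obtain ⟨K, hKI, hKJ⟩ := ess_inter I J
    rw [← hΨcompat K I hKI s ω hω, hΨcompat K J hKJ s ω hω]
  -- bounded fields are closed under the operations
  have zero_bdd : (fun t => (0 : H t)) ∈ boundedFields Ω :=
    ⟨hΩ.zero_mem, 0, fun t => by simp⟩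
  have bdd_add : ∀ ω ∈ boundedFields Ω, ∀ ν ∈ boundedFields Ω,
      ω + ν ∈ boundedFields Ω := by
    rintro ω ⟨hω, Mω, hMω⟩ ν ⟨hν, Mν, hMν⟩
    exact ⟨hΩ.add_mem ω hω ν hν, Mω + Mν, fun t =>
      (norm_add_le (ω t) (ν t)).trans (add_le_add (hMω t) (hMν t))⟩
  have bdd_smul : ∀ (c : ℂ), ∀ ω ∈ boundedFields Ω, c • ω ∈ boundedFields Ω := by
    rintro c ω ⟨hω, M, hM⟩
    refine ⟨hΩ.smul_mem (ContinuousMap.const T c) ω hω, ‖c‖ * M, fun t => ?_⟩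
    calc ‖(c • ω) t‖ = ‖c‖ * ‖ω t‖ := norm_smul _ _
      _ ≤ ‖c‖ * M := mul_le_mul_of_nonneg_left (hM t) (norm_nonneg c)
  have bar_zero : ∀ (I : EssIdeal Ω) (u : βX I), bar I (fun t => (0 : H t)) u = 0 := by
    intro I u
    have h := hbar_smul I 0 _ zero_bdd
    have e : (0 : ℂ) • (fun t => (0 : H t)) = fun t => (0 : H t) := by
      funext t; simp
    rw [e] at h
    have h2 := congrFun h u
    simpa using h2
  -- the set of hat fields
  set Hats : Set (∀ s, HΔ s) := {h | ∃ (I : EssIdeal Ω) (ω : ∀ t, H t),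
    ω ∈ boundedFields Ω ∧ h = fun s => Ψ I s (bar I ω (Φ I s))} with hHatsDef
  have hats_lam : ∀ h ∈ Hats, h ∈ Lam := by
    rintro h ⟨I, ω, hω, rfl⟩
    exact ⟨I, bar I ω, locUnifApprox_of_mem ⟨ω, hω, rfl⟩, rfl⟩
  have bar_norm_cont : ∀ (I : EssIdeal Ω) (ω : ∀ t, H t), ω ∈ boundedFields Ω →
      Continuous fun u : βX I => ‖bar I ω u‖ := by
    intro I ω hω
    have h1 := hbar_inner_cont I ω hω ω hω
    have e : (fun u : βX I => ‖bar I ω u‖)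
        = fun u => Real.sqrt (RCLike.re (K := ℂ) (inner ℂ (bar I ω u) (bar I ω u) : ℂ)) := by
      funext u
      exact norm_eq_sqrt_re_inner (𝕜 := ℂ) _
    rw [e]
    exact (RCLike.continuous_re.comp h1).sqrt
  have lam_norm_cont : ∀ μ ∈ Lam, Continuous fun s => ‖μ s‖ := by
    rintro μ ⟨I, ν, hν, rfl⟩
    have hS : ∀ w ∈ bar I '' boundedFields Ω, Continuous fun u : βX I => ‖w u‖ := by
      rintro w ⟨ω, hω, rfl⟩; exact bar_norm_cont I ω hω
    have h2 : Continuous fun u : βX I => ‖ν u‖ := locUnifApprox_norm_continuous hS hν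
    have e : (fun s : Δ => ‖(fun s => Ψ I s (ν (Φ I s))) s‖) = fun s => ‖ν (Φ I s)‖ := by
      funext s; exact (Ψ I s).norm_map _
    rw [e]
    exact h2.comp (hΦcont I)
  have bddΔ : ∀ f : Δ → ℝ, Continuous f → ∃ M : ℝ, ∀ s, f s ≤ M := by
    intro f hf
    obtain ⟨M, hM⟩ := (isCompact_range hf).bddAbove
    exact ⟨M, fun s => hM (Set.mem_range_self s)⟩
  have lam_sub : ∀ μ ∈ Lam, μ ∈ ΩΔ := fun μ hμ =>
    ⟨bddΔ _ (lam_norm_cont μ hμ), locUnifApprox_of_mem hμ⟩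
  have lam_to_hats : ∀ μ ∈ Lam, LocUnifApprox Hats μ := by
    rintro μ ⟨I, ν, hν, rfl⟩ s₀ ε hε
    obtain ⟨V, hV, hmem, w, hwS, hw⟩ := hν (Φ I s₀) ε hε
    obtain ⟨ω, hω, rfl⟩ := hwS
    refine ⟨Φ I ⁻¹' V, hV.preimage (hΦcont I), hmem,
      (fun s => Ψ I s (bar I ω (Φ I s))), ⟨I, ω, hω, rfl⟩, fun s hs => ?_⟩
    have h1 := hw (Φ I s) hs
    have e : ‖Ψ I s (bar I ω (Φ I s)) - Ψ I s (ν (Φ I s))‖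
        = ‖bar I ω (Φ I s) - ν (Φ I s)‖ := by
      rw [← dist_eq_norm, ← dist_eq_norm]
      exact (Ψ I s).dist_map _ _
    show ‖Ψ I s (bar I ω (Φ I s)) - Ψ I s (ν (Φ I s))‖ < ε
    rw [e]; exact h1
  have omega_to_hats : ∀ ξ : ∀ s, HΔ s, LocUnifApprox Lam ξ → LocUnifApprox Hats ξ :=
    fun ξ => locUnifApprox_trans lam_to_hats
  have hats_to_omega : ∀ ξ : ∀ s, HΔ s, LocUnifApprox Hats ξ → LocUnifApprox Lam ξ :=
    fun ξ => locUnifApprox_trans (fun h hh => locUnifApprox_of_mem (hats_lam h hh))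
  -- zero field
  have zero_mem' : (fun s => (0 : HΔ s)) ∈ ΩΔ := by
    refine ⟨⟨0, fun s => by simp⟩, ?_⟩
    intro s₀ ε hε
    obtain ⟨I, -, -, -⟩ := hΨdense s₀ 0 1 one_pos
    refine ⟨Set.univ, isOpen_univ, trivial,
      (fun s => Ψ I s (bar I (fun t => (0 : H t)) (Φ I s))),
      hats_lam _ ⟨I, _, zero_bdd, rfl⟩, fun s _ => ?_⟩
    show ‖Ψ I s (bar I (fun t => (0 : H t)) (Φ I s)) - 0‖ < ε
    rw [bar_zero I (Φ I s)]
    simpa using hε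
  -- addition
  have add_mem' : ∀ ξ ∈ ΩΔ, ∀ ζ ∈ ΩΔ, (fun s => ξ s + ζ s) ∈ ΩΔ := by
    rintro ξ ⟨⟨Mξ, hMξ⟩, hξ⟩ ζ ⟨⟨Mζ, hMζ⟩, hζ⟩
    refine ⟨⟨Mξ + Mζ, fun s => (norm_add_le _ _).trans (add_le_add (hMξ s) (hMζ s))⟩, ?_⟩
    apply hats_to_omega
    intro s₀ ε hε
    obtain ⟨U₁, hU₁, hs₁, h₁, hh₁H, hh₁⟩ := omega_to_hats ξ hξ s₀ (ε / 2) (by linarith)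
    obtain ⟨U₂, hU₂, hs₂, h₂, hh₂H, hh₂⟩ := omega_to_hats ζ hζ s₀ (ε / 2) (by linarith)
    obtain ⟨I₁, ω₁, hω₁, rfl⟩ := hh₁H
    obtain ⟨I₂, ω₂, hω₂, rfl⟩ := hh₂H
    obtain ⟨K, hK₁, hK₂⟩ := ess_inter I₁ I₂
    have hωsum : ω₁ + ω₂ ∈ boundedFields Ω := bdd_add ω₁ hω₁ ω₂ hω₂
    refine ⟨U₁ ∩ U₂, hU₁.inter hU₂, ⟨hs₁, hs₂⟩,
      (fun s => Ψ K s (bar K (ω₁ + ω₂) (Φ K s))), ⟨K, _, hωsum, rfl⟩, fun s hs => ?_⟩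
    have hval : Ψ K s (bar K (ω₁ + ω₂) (Φ K s))
        = Ψ I₁ s (bar I₁ ω₁ (Φ I₁ s)) + Ψ I₂ s (bar I₂ ω₂ (Φ I₂ s)) := by
      rw [hbar_add K ω₁ hω₁ ω₂ hω₂]
      have e : (bar K ω₁ + bar K ω₂) (Φ K s) = bar K ω₁ (Φ K s) + bar K ω₂ (Φ K s) := rfl
      rw [e, map_add, hΨcompat K I₁ hK₁ s ω₁ hω₁, hΨcompat K I₂ hK₂ s ω₂ hω₂]
    have e1 : ‖Ψ I₁ s (bar I₁ ω₁ (Φ I₁ s)) - ξ s‖ < ε / 2 := hh₁ s hs.1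
    have e2 : ‖Ψ I₂ s (bar I₂ ω₂ (Φ I₂ s)) - ζ s‖ < ε / 2 := hh₂ s hs.2
    show ‖Ψ K s (bar K (ω₁ + ω₂) (Φ K s)) - (ξ s + ζ s)‖ < ε
    rw [hval]
    calc ‖(Ψ I₁ s (bar I₁ ω₁ (Φ I₁ s)) + Ψ I₂ s (bar I₂ ω₂ (Φ I₂ s))) - (ξ s + ζ s)‖
        = ‖(Ψ I₁ s (bar I₁ ω₁ (Φ I₁ s)) - ξ s) + (Ψ I₂ s (bar I₂ ω₂ (Φ I₂ s)) - ζ s)‖ := by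
          rw [add_sub_add_comm]
      _ ≤ ‖Ψ I₁ s (bar I₁ ω₁ (Φ I₁ s)) - ξ s‖ + ‖Ψ I₂ s (bar I₂ ω₂ (Φ I₂ s)) - ζ s‖ :=
          norm_add_le _ _
      _ < ε := by linarith
  -- scalar action of C(Δ, ℂ)
  have smul_mem' : ∀ (f : C(Δ, ℂ)), ∀ ξ ∈ ΩΔ, (fun s => f s • ξ s) ∈ ΩΔ := by
    rintro f ξ ⟨⟨M₀, hM₀⟩, hξ⟩
    have hMb : ∀ s, ‖ξ s‖ ≤ max M₀ 0 := fun s => (hM₀ s).trans (le_max_left _ _)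
    set M := max M₀ 0 with hMdef
    have hM0 : (0:ℝ) ≤ M := le_max_right _ _
    refine ⟨⟨‖f‖ * M, fun s => ?_⟩, ?_⟩
    · show ‖f s • ξ s‖ ≤ ‖f‖ * M
      rw [norm_smul]
      exact mul_le_mul (f.norm_coe_le_norm s) (hMb s) (norm_nonneg _) (norm_nonneg _)
    apply hats_to_omega
    intro s₀ ε hε
    set c := f s₀ with hcdef
    have hδ : (0:ℝ) < ε / (2 * (M + 1)) := by positivity
    have hε' : (0:ℝ) < ε / (2 * (‖c‖ + 1)) := by positivity
    obtain ⟨U₁, hU₁, hs₁, h₁, hh₁H, hh₁⟩ := omega_to_hats ξ hξ s₀ (ε / (2 * (‖c‖ + 1))) hε'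
    obtain ⟨I, ω, hω, rfl⟩ := hh₁H
    have hU₂ : IsOpen {s : Δ | ‖f s - c‖ < ε / (2 * (M + 1))} := by
      have hcont : Continuous fun s : Δ => ‖f s - c‖ :=
        (f.continuous.sub continuous_const).norm
      exact isOpen_lt hcont continuous_const
    have hs₂ : s₀ ∈ {s : Δ | ‖f s - c‖ < ε / (2 * (M + 1))} := by
      show ‖f s₀ - c‖ < ε / (2 * (M + 1))
      rw [hcdef, sub_self, norm_zero]; exact hδ
    have hcω : c • ω ∈ boundedFields Ω := bdd_smul c ω hω
    refine ⟨U₁ ∩ {s : Δ | ‖f s - c‖ < ε / (2 * (M + 1))}, hU₁.inter hU₂, ⟨hs₁, hs₂⟩,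
      (fun s => Ψ I s (bar I (c • ω) (Φ I s))), ⟨I, _, hcω, rfl⟩, fun s hs => ?_⟩
    have hval : Ψ I s (bar I (c • ω) (Φ I s)) = c • Ψ I s (bar I ω (Φ I s)) := by
      rw [hbar_smul I c ω hω]
      have e : (c • bar I ω) (Φ I s) = c • bar I ω (Φ I s) := rfl
      rw [e, map_smul]
    have e1 : ‖Ψ I s (bar I ω (Φ I s)) - ξ s‖ < ε / (2 * (‖c‖ + 1)) := hh₁ s hs.1
    have e2 : ‖f s - c‖ < ε / (2 * (M + 1)) := hs.2
    show ‖Ψ I s (bar I (c • ω) (Φ I s)) - f s • ξ s‖ < ε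
    rw [hval]
    have key : c • Ψ I s (bar I ω (Φ I s)) - f s • ξ s
        = c • (Ψ I s (bar I ω (Φ I s)) - ξ s) + (c - f s) • ξ s := by
      rw [smul_sub, sub_smul]; abel
    rw [key]
    have b1 : ‖c • (Ψ I s (bar I ω (Φ I s)) - ξ s)‖ ≤ ‖c‖ * (ε / (2 * (‖c‖ + 1))) := by
      rw [norm_smul]
      exact mul_le_mul_of_nonneg_left e1.le (norm_nonneg c)
    have b2 : ‖(c - f s) • ξ s‖ ≤ (ε / (2 * (M + 1))) * M := by
      rw [norm_smul]
      have hle : ‖c - f s‖ ≤ ε / (2 * (M + 1)) := by rw [norm_sub_rev]; exact e2.le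
      exact mul_le_mul hle (hMb s) (norm_nonneg _) hδ.le
    have hb1 : ‖c‖ * (ε / (2 * (‖c‖ + 1))) < ε / 2 := by
      have hpos : (0:ℝ) < 2 * (‖c‖ + 1) := by positivity
      rw [mul_div_assoc', div_lt_iff₀ hpos]
      have hcn := norm_nonneg c
      nlinarith
    have hb2 : (ε / (2 * (M + 1))) * M < ε / 2 := by
      have hpos : (0:ℝ) < 2 * (M + 1) := by positivity
      rw [div_mul_eq_mul_div, div_lt_iff₀ hpos]
      nlinarith
    calc ‖c • (Ψ I s (bar I ω (Φ I s)) - ξ s) + (c - f s) • ξ s‖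
        ≤ ‖c • (Ψ I s (bar I ω (Φ I s)) - ξ s)‖ + ‖(c - f s) • ξ s‖ := norm_add_le _ _
      _ < ε := by linarith
  -- norm continuity
  have norm_cont' : ∀ ξ ∈ ΩΔ, Continuous fun s => ‖ξ s‖ := fun ξ hξ =>
    locUnifApprox_norm_continuous lam_norm_cont hξ.2
  -- closure under local uniform approximation
  have closed' : ∀ ξ : ∀ s, HΔ s, LocUnifApprox ΩΔ ξ → ξ ∈ ΩΔ := by
    intro ξ hξ
    have hlam : LocUnifApprox Lam ξ := locUnifApprox_trans (fun μ hμ => hμ.2) hξ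
    refine ⟨?_, hlam⟩
    by_cases hne : Nonempty Δ
    · choose U hUo hUm ω hωm happ using fun s => hξ s 1 one_pos
      have hcov : Set.univ ⊆ ⋃ s, U s := fun x _ => Set.mem_iUnion.mpr ⟨x, hUm x⟩
      obtain ⟨t, ht⟩ := isCompact_univ.elim_finite_subcover U hUo hcov
      choose M hM using fun s => (hωm s).1
      refine ⟨(∑ j ∈ t, max (M j) 0) + 1, fun x => ?_⟩
      obtain ⟨j, hjt, hxU⟩ := Set.mem_iUnion₂.mp (ht (Set.mem_univ x))
      have key : ‖ξ x‖ ≤ ‖ω j x‖ + ‖ω j x - ξ x‖ := by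
        have e : ξ x = ω j x - (ω j x - ξ x) := by abel
        calc ‖ξ x‖ = ‖ω j x - (ω j x - ξ x)‖ := by rw [← e]
          _ ≤ ‖ω j x‖ + ‖ω j x - ξ x‖ := norm_sub_le _ _
      have h2 : ‖ω j x - ξ x‖ < 1 := happ j x hxU
      have h3 : ‖ω j x‖ ≤ M j := hM j x
      have h4 : M j ≤ ∑ j ∈ t, max (M j) 0 :=
        le_trans (le_max_left _ _)
          (Finset.single_le_sum (fun i _ => le_max_right (M i) 0) hjt)
      linarith
    · exact ⟨0, fun s => absurd ⟨s⟩ hne⟩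
  -- fullness
  have full' : ∀ (s : Δ) (v : HΔ s), ∃ ξ ∈ ΩΔ, ξ s = v := by
    intro s v
    have hpow : ∀ n : ℕ, (0:ℝ) < (1/2 : ℝ) ^ (n + 2) := fun n => by positivity
    choose I ν hν hlt using fun n : ℕ => hΨdense s v ((1/2 : ℝ) ^ (n + 2)) (hpow n)
    set μ : ℕ → ∀ s' : Δ, HΔ s' := fun n s' => Ψ (I n) s' (ν n (Φ (I n) s')) with hμdef
    have hμlam : ∀ n, μ n ∈ Lam := fun n => ⟨I n, ν n, hν n, rfl⟩
    have hμmem : ∀ n, μ n ∈ ΩΔ := fun n => lam_sub _ (hμlam n)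
    have hμs : ∀ n, ‖μ n s - v‖ < (1/2:ℝ) ^ (n + 2) := hlt
    set d : ℕ → ∀ s' : Δ, HΔ s' := fun n s' => μ (n+1) s' - μ n s' with hddef
    have hdmem : ∀ n, d n ∈ ΩΔ := by
      intro n
      have h1 : (fun s' => (ContinuousMap.const Δ (-1 : ℂ)) s' • μ n s') ∈ ΩΔ :=
        smul_mem' (ContinuousMap.const Δ (-1)) (μ n) (hμmem n)
      have h2 := add_mem' (μ (n+1)) (hμmem (n+1)) _ h1
      have e : (fun s' => μ (n+1) s' + (ContinuousMap.const Δ (-1 : ℂ)) s' • μ n s') = d n := by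
        funext s'
        show μ (n+1) s' + (-1 : ℂ) • μ n s' = μ (n+1) s' - μ n s'
        rw [neg_one_smul, sub_eq_add_neg]
      rwa [e] at h2
    have hVopen : ∀ n : ℕ, IsOpen {s' : Δ | ‖d n s'‖ < (1/2:ℝ) ^ (n+1)} := fun n =>
      isOpen_lt (norm_cont' (d n) (hdmem n)) continuous_const
    have hsV : ∀ n, s ∈ {s' : Δ | ‖d n s'‖ < (1/2:ℝ) ^ (n+1)} := by
      intro n
      have e : d n s = (μ (n+1) s - v) - (μ n s - v) := by
        show μ (n+1) s - μ n s = _; abel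
      have hb : ‖d n s‖ ≤ ‖μ (n+1) s - v‖ + ‖μ n s - v‖ := by
        rw [e]; exact norm_sub_le _ _
      have h1 := hμs (n+1)
      have h2 := hμs n
      have e1 : ((1:ℝ)/2)^(n+1+2) = (1/2:ℝ)^n * (1/8) := by ring
      have e2 : ((1:ℝ)/2)^(n+2) = (1/2:ℝ)^n * (1/4) := by ring
      have e3 : ((1:ℝ)/2)^(n+1) = (1/2:ℝ)^n * (1/2) := by ring
      have hp : (0:ℝ) < (1/2:ℝ)^n := by positivity
      show ‖d n s‖ < (1/2:ℝ)^(n+1)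
      rw [e3]; rw [e1] at h1; rw [e2] at h2; linarith
    have urysohn : ∀ n : ℕ, ∃ f : C(Δ, ℝ),
        Set.EqOn f 0 {s' : Δ | ‖d n s'‖ < (1/2:ℝ) ^ (n+1)}ᶜ ∧
        Set.EqOn f 1 {s} ∧ ∀ x, f x ∈ Set.Icc (0:ℝ) 1 := by
      intro n
      refine exists_continuous_zero_one_of_isClosed
        (isClosed_compl_iff.mpr (hVopen n)) isClosed_singleton ?_
      rw [Set.disjoint_left]
      intro a ha ha'
      rw [Set.mem_singleton_iff] at ha'
      subst ha'
      exact ha (hsV n)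
    choose f hf0 hf1 hf01 using urysohn
    set η : ℕ → ∀ s' : Δ, HΔ s' := fun n s' => (f n s' : ℂ) • d n s' with hηdef
    have hηmem : ∀ n, η n ∈ ΩΔ := by
      intro n
      exact smul_mem' ⟨fun s' => (f n s' : ℂ),
        Complex.continuous_ofReal.comp (f n).continuous⟩ (d n) (hdmem n)
    have hηb : ∀ n s', ‖η n s'‖ ≤ (1/2:ℝ) ^ (n+1) := by
      intro n s'
      by_cases h : s' ∈ {x : Δ | ‖d n x‖ < (1/2:ℝ) ^ (n+1)}
      · have h01 := hf01 n s'
        have e : ‖η n s'‖ = |f n s'| * ‖d n s'‖ := by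
          show ‖(f n s' : ℂ) • d n s'‖ = _
          rw [norm_smul, Complex.norm_real, Real.norm_eq_abs]
        rw [e]
        have habs : |f n s'| ≤ 1 := abs_le.mpr ⟨by linarith [h01.1], h01.2⟩
        calc |f n s'| * ‖d n s'‖ ≤ 1 * ‖d n s'‖ :=
              mul_le_mul_of_nonneg_right habs (norm_nonneg _)
          _ = ‖d n s'‖ := one_mul _
          _ ≤ (1/2:ℝ) ^ (n+1) := le_of_lt h
      · have hz : f n s' = 0 := hf0 n h
        show ‖(f n s' : ℂ) • d n s'‖ ≤ (1/2:ℝ) ^ (n+1)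
        rw [hz]
        simp only [Complex.ofReal_zero, zero_smul, norm_zero]
        positivity
    set σ : ℕ → ∀ s' : Δ, HΔ s' :=
      fun N s' => μ 0 s' + ∑ n ∈ Finset.range N, η n s' with hσdef
    have hσmem : ∀ N, σ N ∈ ΩΔ := by
      intro N
      induction N with
      | zero =>
        have e : σ 0 = μ 0 := by
          funext s'
          show μ 0 s' + ∑ n ∈ Finset.range 0, η n s' = μ 0 s'
          simp
        rw [e]; exact hμmem 0
      | succ N ih =>
        have e : σ (N+1) = fun s' => σ N s' + η N s' := by
          funext s'
          show μ 0 s' + ∑ n ∈ Finset.range (N+1), η n s'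
              = (μ 0 s' + ∑ n ∈ Finset.range N, η n s') + η N s'
          rw [Finset.sum_range_succ, add_assoc]
        rw [e]
        exact add_mem' (σ N) ih (η N) (hηmem N)
    have hgeom : Summable fun n : ℕ => (1/2:ℝ) ^ (n+1) :=
      (summable_geometric_two.mul_left (1/2)).congr fun n => by ring
    have hηsum : ∀ s', Summable fun n => η n s' := fun s' =>
      Summable.of_norm_bounded hgeom (fun n => hηb n s')
    set ξf : ∀ s' : Δ, HΔ s' := fun s' => μ 0 s' + ∑' n, η n s' with hξfdef
    have htail : ∀ (N : ℕ) (s' : Δ), ‖ξf s' - σ N s'‖ ≤ (1/2:ℝ) ^ N := by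
      intro N s'
      have hsum := hηsum s'
      have h1 : ∑ n ∈ Finset.range N, η n s' + ∑' n, η (n + N) s' = ∑' n, η n s' :=
        hsum.sum_add_tsum_nat_add N
      have e : ξf s' - σ N s' = ∑' n, η (n + N) s' := by
        show (μ 0 s' + ∑' n, η n s') - (μ 0 s' + ∑ n ∈ Finset.range N, η n s') = _
        rw [← h1]; abel
      rw [e]
      have hgeom2 : Summable fun n : ℕ => (1/2:ℝ) ^ (n + N + 1) :=
        (hgeom.mul_right ((1/2:ℝ) ^ N)).congr fun n => by ring
      have hb : ∀ n : ℕ, ‖η (n + N) s'‖ ≤ (1/2:ℝ) ^ (n + N + 1) := fun n => by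
        have := hηb (n + N) s'
        have e2 : ((1:ℝ)/2) ^ (n + N + 1) = (1/2:ℝ) ^ (n + N + 1) := by norm_num
        linarith [this]
      have hnormsum : Summable fun n : ℕ => ‖η (n + N) s'‖ :=
        Summable.of_nonneg_of_le (fun n => norm_nonneg _) hb hgeom2
      have hval : ∑' n : ℕ, ((1:ℝ)/2) ^ (n + N + 1) = (1/2:ℝ) ^ N := by
        have h2 : ∑' n : ℕ, ((1:ℝ)/2) ^ (n + N + 1)
            = ∑' n : ℕ, (((1:ℝ)/2) ^ (n+1) * (1/2:ℝ) ^ N) := by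
          apply tsum_congr; intro n; ring
        rw [h2, tsum_mul_right]
        have h4 : ∑' n : ℕ, ((1:ℝ)/2) ^ (n+1) = 1 := by
          have h5 : ∑' n : ℕ, ((1:ℝ)/2) ^ (n+1) = ∑' n : ℕ, (1/2) * ((1:ℝ)/2) ^ n := by
            apply tsum_congr; intro n; ring
          rw [h5, tsum_mul_left, tsum_geometric_two]; norm_num
        rw [h4, one_mul]
      calc ‖∑' n, η (n + N) s'‖ ≤ ∑' n, ‖η (n + N) s'‖ := norm_tsum_le_tsum_norm hnormsum
        _ ≤ ∑' n : ℕ, ((1:ℝ)/2) ^ (n + N + 1) := Summable.tsum_le_tsum hb hnormsum hgeom2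
        _ = (1/2:ℝ) ^ N := hval
    have hξfmem : ξf ∈ ΩΔ := by
      constructor
      · obtain ⟨M0, hM0⟩ := (hσmem 0).1
        refine ⟨M0 + 1, fun s' => ?_⟩
        have h1 := htail 0 s'
        rw [pow_zero] at h1
        have key : ‖ξf s'‖ ≤ ‖σ 0 s'‖ + ‖ξf s' - σ 0 s'‖ := by
          have e : ξf s' = σ 0 s' + (ξf s' - σ 0 s') := by abel
          calc ‖ξf s'‖ = ‖σ 0 s' + (ξf s' - σ 0 s')‖ := by rw [← e]
            _ ≤ ‖σ 0 s'‖ + ‖ξf s' - σ 0 s'‖ := norm_add_le _ _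
        have h2 := hM0 s'
        linarith
      · intro s₀ ε hε
        obtain ⟨N, hN⟩ := exists_pow_lt_of_lt_one
          (show (0:ℝ) < ε/2 by linarith) (show (1/2:ℝ) < 1 by norm_num)
        obtain ⟨U, hU, hsU, μ', hμ'L, hμ'⟩ := (hσmem N).2 s₀ (ε/2) (by linarith)
        refine ⟨U, hU, hsU, μ', hμ'L, fun x hx => ?_⟩
        have h1 := hμ' x hx
        have h2 := htail N x
        have h3 : ‖σ N x - ξf x‖ = ‖ξf x - σ N x‖ := norm_sub_rev _ _
        calc ‖μ' x - ξf x‖ = ‖(μ' x - σ N x) + (σ N x - ξf x)‖ := by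
              rw [sub_add_sub_cancel]
          _ ≤ ‖μ' x - σ N x‖ + ‖σ N x - ξf x‖ := norm_add_le _ _
          _ < ε := by rw [h3]; linarith
    have hηs : ∀ n, η n s = μ (n+1) s - μ n s := by
      intro n
      have h1 : f n s = 1 := hf1 n rfl
      show ((f n s : ℝ) : ℂ) • d n s = μ (n+1) s - μ n s
      rw [h1]
      show ((1:ℝ) : ℂ) • (μ (n+1) s - μ n s) = μ (n+1) s - μ n s
      simp
    have hσs : ∀ N, σ N s = μ N s := by
      intro N
      show μ 0 s + ∑ n ∈ Finset.range N, η n s = μ N s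
      have e : ∀ n ∈ Finset.range N, η n s = μ (n+1) s - μ n s := fun n _ => hηs n
      rw [Finset.sum_congr rfl e, Finset.sum_range_sub (fun n => μ n s)]
      abel
    have hg0 : Filter.Tendsto (fun N : ℕ => (1/2:ℝ) ^ (N+2)) Filter.atTop (nhds 0) := by
      have h := tendsto_pow_atTop_nhds_zero_of_lt_one
        (show (0:ℝ) ≤ 1/2 by norm_num) (show (1/2:ℝ) < 1 by norm_num)
      have h2 := h.comp (Filter.tendsto_add_atTop_nat 2)
      simpa [Function.comp_def] using h2
    have hμtend : Filter.Tendsto (fun N => μ N s) Filter.atTop (nhds v) := by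
      rw [tendsto_iff_norm_sub_tendsto_zero]
      exact squeeze_zero (fun N => norm_nonneg _) (fun N => (hμs N).le) hg0
    have hσtend : Filter.Tendsto (fun N => σ N s) Filter.atTop (nhds (ξf s)) := by
      have h1 : HasSum (fun n => η n s) (∑' n, η n s) := (hηsum s).hasSum
      have h2 := h1.tendsto_sum_nat
      have h3 := h2.const_add (μ 0 s)
      exact h3
    have hσtend' : Filter.Tendsto (fun N => σ N s) Filter.atTop (nhds v) := by
      have e : (fun N => σ N s) = fun N => μ N s := funext hσs
      rw [e]; exact hμtend
    exact ⟨ξf, hξfmem, tendsto_nhds_unique hσtend hσtend'⟩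
  exact { zero_mem := zero_mem', add_mem := add_mem', smul_mem := smul_mem',
          full := full', norm_continuous := norm_cont', closed_locUnif := closed' }
end

section
/- Let A be the Fell C*-algebra of a continuous Hilbert bundle over a locally compact Hausdorff space T. Then Ω^Δ is the Banach-space direct limit of the system ({Ω^I}, {λ_{JI}}): for every ξ ∈ Ω^Δ and every ε > 0 there exist an essential ideal I of A and ν ∈ Ω^I such that ‖ξ(s) − (ν∘Φ_I)(s)‖ < ε for every s ∈ Δ; that is, the set {ν∘Φ_I : I an essential ideal of A, ν ∈ Ω^I} is dense in Ω^Δ with respect to the supremum norm. -/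
section Aux

variable {T : Type*} [TopologicalSpace T] {H : T → Type*}
  [∀ t, NormedAddCommGroup (H t)] [∀ t, InnerProductSpace ℂ (H t)]
  [∀ t, CompleteSpace (H t)]

theorem IsIdealOf.inter' {A I J : Set (∀ t, H t →L[ℂ] H t)}
    (hI : IsIdealOf A I) (hJ : IsIdealOf A J) : IsIdealOf A (I ∩ J) where
  subset := fun a ha => hI.subset ha.1
  zero_mem := ⟨hI.zero_mem, hJ.zero_mem⟩
  add_mem := fun a ha b hb => ⟨hI.add_mem a ha.1 b hb.1, hJ.add_mem a ha.2 b hb.2⟩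
  smul_mem := fun c a ha => ⟨hI.smul_mem c a ha.1, hJ.smul_mem c a ha.2⟩
  star_mem := fun a ha => ⟨hI.star_mem a ha.1, hJ.star_mem a ha.2⟩
  mul_mem_left := fun a ha b hb => ⟨hI.mul_mem_left a ha b hb.1, hJ.mul_mem_left a ha b hb.2⟩
  mul_mem_right := fun a ha b hb => ⟨hI.mul_mem_right a ha.1 b hb, hJ.mul_mem_right a ha.2 b hb⟩
  norm_closed := fun a ha hap =>
    ⟨hI.norm_closed a ha (fun ε hε => (hap ε hε).imp fun _ hb => ⟨hb.1.1, hb.2⟩),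
     hJ.norm_closed a ha (fun ε hε => (hap ε hε).imp fun _ hb => ⟨hb.1.2, hb.2⟩)⟩

theorem IsEssentialIdealOf.inter' {A I J : Set (∀ t, H t →L[ℂ] H t)}
    (hI : IsEssentialIdealOf A I) (hJ : IsEssentialIdealOf A J) :
    IsEssentialIdealOf A (I ∩ J) := by
  refine ⟨hI.1.inter' hJ.1, fun K hK hKne => ?_⟩
  obtain ⟨c, hcI, hcK, hc0⟩ := hI.2 K hK hKne
  obtain ⟨d, hdJ, hdIK, hd0⟩ := hJ.2 (I ∩ K) (hI.1.inter' hK) ⟨c, ⟨hcI, hcK⟩, hc0⟩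
  exact ⟨d, ⟨hdIK.1, hdJ⟩, hdIK.2, hd0⟩

end Aux

/-- Theorem `omega limit`.  `Ω^Δ = lim→ Ω^I` as a Banach
space: every `ξ ∈ Ω^Δ` is a *global* uniform limit of fields `ν∘Φ_I`; that is,
`{ν∘Φ_I : I essential, ν ∈ Ω^I}` is dense in `Ω^Δ` in the supremum norm. -/
theorem omegaDelta_eq_banach_direct_limit
    {T : Type} [TopologicalSpace T] [LocallyCompactSpace T] [T2Space T]
    {H : T → Type} [∀ t, NormedAddCommGroup (H t)] [∀ t, InnerProductSpace ℂ (H t)]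
    [∀ t, CompleteSpace (H t)]
    (Ω : Set (∀ t, H t)) (hΩ : IsCtsHilbertBundle Ω)
    -- Stone–Čech data over every essential ideal:
    {βX : EssIdeal Ω → Type} [∀ I, TopologicalSpace (βX I)]
    [∀ I, CompactSpace (βX I)] [∀ I, T2Space (βX I)]
    (ι : ∀ I : EssIdeal Ω, idealSupp I.1 → βX I)
    (hι : ∀ I, Topology.IsEmbedding (ι I)) (hιd : ∀ I, DenseRange (ι I))
    {HI : ∀ I : EssIdeal Ω, βX I → Type}
    [∀ I u, NormedAddCommGroup (HI I u)] [∀ I u, InnerProductSpace ℂ (HI I u)]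
    [∀ I u, CompleteSpace (HI I u)]
    (bar : ∀ I : EssIdeal Ω, (∀ t, H t) → ∀ u, HI I u)
    (hbar_add : ∀ I, ∀ ω ∈ boundedFields Ω, ∀ ν ∈ boundedFields Ω,
      bar I (ω + ν) = bar I ω + bar I ν)
    (hbar_smul : ∀ I, ∀ (c : ℂ), ∀ ω ∈ boundedFields Ω, bar I (c • ω) = c • bar I ω)
    (hbar_inner_cont : ∀ I, ∀ ω ∈ boundedFields Ω, ∀ ν ∈ boundedFields Ω,
      Continuous fun u => (inner ℂ (bar I ω u) (bar I ν u) : ℂ))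
    (hbar_inner_eq : ∀ I, ∀ ω ∈ boundedFields Ω, ∀ ν ∈ boundedFields Ω,
      ∀ x : idealSupp I.1, (inner ℂ (bar I ω (ι I x)) (bar I ν (ι I x)) : ℂ) =
        (inner ℂ (ω x.1) (ν x.1) : ℂ))
    (hbar_dense : ∀ I (u : βX I) (v : HI I u) (ε : ℝ), 0 < ε →
      ∃ ω ∈ boundedFields Ω, ‖bar I ω u - v‖ < ε)
    -- the connecting maps `Φ_{JI} : βX^I → βX^J` (for `I ⊆ J`):
    (hXmono : ∀ I J : EssIdeal Ω, I.1 ⊆ J.1 →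
      (idealSupp I.1 : Set T) ⊆ idealSupp J.1)
    (Φmap : ∀ I J : EssIdeal Ω, I.1 ⊆ J.1 → βX I → βX J)
    (hΦmap_cont : ∀ I J h, Continuous (Φmap I J h))
    (hΦmap_ι : ∀ I J (h : I.1 ⊆ J.1) (x : idealSupp I.1),
      Φmap I J h (ι I x) = ι J (Set.inclusion (hXmono I J h) x))
    -- the inverse limit `Δ = lim← βX^I` with canonical surjections `Φ_I`:
    {Δ : Type} [TopologicalSpace Δ] [CompactSpace Δ] [T2Space Δ]
    (Φ : ∀ I : EssIdeal Ω, Δ → βX I)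
    (hΦcont : ∀ I, Continuous (Φ I)) (hΦsurj : ∀ I, Function.Surjective (Φ I))
    (hΦcompat : ∀ I J (h : I.1 ⊆ J.1) (s : Δ), Φmap I J h (Φ I s) = Φ J s)
    (hΦsep : ∀ s s' : Δ, (∀ I, Φ I s = Φ I s') → s = s')
    (hΦlim : ∀ x : ∀ I : EssIdeal Ω, βX I,
      (∀ I J (h : I.1 ⊆ J.1), Φmap I J h (x I) = x J) → ∃ s : Δ, ∀ I, Φ I s = x I)
    (hbasis : ∀ W : Set Δ, IsOpen W → ∀ s ∈ W, ∃ (I : EssIdeal Ω) (V : Set (βX I)),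
      IsOpen V ∧ s ∈ Φ I ⁻¹' V ∧ Φ I ⁻¹' V ⊆ W)
    -- the limit fibres `H_s^Δ` with canonical unitaries `Ψ_{I,s}`:
    {HΔ : Δ → Type} [∀ s, NormedAddCommGroup (HΔ s)]
    [∀ s, InnerProductSpace ℂ (HΔ s)] [∀ s, CompleteSpace (HΔ s)]
    (Ψ : ∀ (I : EssIdeal Ω) (s : Δ), HI I (Φ I s) ≃ₗᵢ[ℂ] HΔ s)
    (hΨcompat : ∀ I J (h : I.1 ⊆ J.1) (s : Δ), ∀ ω ∈ boundedFields Ω,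
      Ψ I s (bar I ω (Φ I s)) = Ψ J s (bar J ω (Φ J s)))
    (hΨdense : ∀ (s : Δ) (v : HΔ s) (ε : ℝ), 0 < ε →
      ∃ (I : EssIdeal Ω) (ν : ∀ u, HI I u), ν ∈ OmegaExt Ω (bar I) ∧
        ‖Ψ I s (ν (Φ I s)) - v‖ < ε) :
    -- conclusion:
    ∀ ξ ∈ {ξ : ∀ s, HΔ s | (∃ M : ℝ, ∀ s, ‖ξ s‖ ≤ M) ∧
        LocUnifApprox
          {μ : ∀ s, HΔ s | ∃ (I : EssIdeal Ω) (ν : ∀ u, HI I u),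
            ν ∈ OmegaExt Ω (bar I) ∧ μ = fun s => Ψ I s (ν (Φ I s))} ξ},
      ∀ ε : ℝ, 0 < ε →
        ∃ (I : EssIdeal Ω) (ν : ∀ u, HI I u), ν ∈ OmegaExt Ω (bar I) ∧
          ∀ s : Δ, ‖ξ s - Ψ I s (ν (Φ I s))‖ < ε := by
  intro ξ hξ ε hε
  classical
  have hzero : (fun t => (0 : H t)) ∈ boundedFields Ω :=
    ⟨hΩ.zero_mem, 0, fun t => by simp⟩
  by_cases hΔne : Nonempty Δ
  · obtain ⟨sstar⟩ := hΔne
    obtain ⟨hbd, hloc⟩ := hξ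
    have inf : ∀ I J : EssIdeal Ω, ∃ K : EssIdeal Ω, K.1 ⊆ I.1 ∧ K.1 ⊆ J.1 :=
      fun I J => ⟨⟨I.1 ∩ J.1, I.2.inter' J.2⟩, Set.inter_subset_left, Set.inter_subset_right⟩
    -- uniform bound on the extended fields `bar I w`
    have hbound : ∀ (I : EssIdeal Ω) (w : ∀ t, H t), w ∈ boundedFields Ω →
        ∃ M : ℝ, 0 ≤ M ∧ ∀ u, ‖bar I w u‖ ≤ M := by
      intro I w hw
      obtain ⟨hΩm, M₀, hM₀⟩ := hw
      have hw' : w ∈ boundedFields Ω := ⟨hΩm, M₀, hM₀⟩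
      refine ⟨max M₀ 0, le_max_right _ _, ?_⟩
      have hcl : IsClosed {u : βX I |
          RCLike.re (inner ℂ (bar I w u) (bar I w u) : ℂ) ≤ (max M₀ 0) ^ 2} :=
        isClosed_le (RCLike.continuous_re.comp (hbar_inner_cont I w hw' w hw')) continuous_const
      have hrange : Set.range (ι I) ⊆ {u : βX I |
          RCLike.re (inner ℂ (bar I w u) (bar I w u) : ℂ) ≤ (max M₀ 0) ^ 2} := by
        rintro _ ⟨x, rfl⟩
        have h1 := hbar_inner_eq I w hw' w hw' x
        simp only [Set.mem_setOf_eq, h1]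
        rw [inner_self_eq_norm_sq (𝕜 := ℂ)]
        exact pow_le_pow_left₀ (norm_nonneg _) ((hM₀ x.1).trans (le_max_left _ _)) 2
      intro u
      have hu : RCLike.re (inner ℂ (bar I w u) (bar I w u) : ℂ) ≤ (max M₀ 0) ^ 2 :=
        closure_minimal hrange hcl ((hιd I) u)
      rw [inner_self_eq_norm_sq (𝕜 := ℂ)] at hu
      nlinarith [norm_nonneg (bar I w u), le_max_right M₀ 0]
    have hsmulmem : ∀ (c : ℂ) (w : ∀ t, H t), w ∈ boundedFields Ω →
        (c • w) ∈ boundedFields Ω := by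
      intro c w hw
      obtain ⟨hm, M, hM⟩ := hw
      refine ⟨hΩ.smul_mem (ContinuousMap.const T c) w hm, ‖c‖ * M, fun t => ?_⟩
      calc ‖(c • w) t‖ = ‖c‖ * ‖w t‖ := norm_smul _ _
        _ ≤ ‖c‖ * M := mul_le_mul_of_nonneg_left (hM t) (norm_nonneg c)
    have haddmem : ∀ (w v : ∀ t, H t), w ∈ boundedFields Ω → v ∈ boundedFields Ω →
        (w + v) ∈ boundedFields Ω := by
      intro w v hw hv
      obtain ⟨hm, M, hM⟩ := hw; obtain ⟨hm', M', hM'⟩ := hv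
      exact ⟨hΩ.add_mem w hm v hm', M + M',
        fun t => (norm_add_le _ _).trans (add_le_add (hM t) (hM' t))⟩
    have hbarzero : ∀ (I : EssIdeal Ω) (u : βX I), bar I (fun t => (0 : H t)) u = 0 := by
      intro I u
      have h1 : (fun t => (0 : H t)) = ((0 : ℂ) • fun t => (0 : H t) : ∀ t, H t) := by
        funext t; simp
      rw [h1, hbar_smul I 0 _ hzero]
      simp
    have hbarsum : ∀ (I : EssIdeal Ω) {κ : Type} (c : κ → ℂ) (w : κ → ∀ t, H t),
        (∀ k, w k ∈ boundedFields Ω) → ∀ s : Finset κ,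
        (fun t => ∑ k ∈ s, c k • w k t) ∈ boundedFields Ω ∧
          ∀ u, bar I (fun t => ∑ k ∈ s, c k • w k t) u = ∑ k ∈ s, c k • bar I (w k) u := by
      intro I κ c w hwmem s
      induction s using Finset.induction_on with
      | empty =>
        constructor
        · simpa using hzero
        · intro u
          have he : (fun t => ∑ k ∈ (∅ : Finset κ), c k • w k t) = (fun t => (0 : H t)) := by
            funext t; simp
          rw [he, hbarzero]
          simp
      | insert a s' ha ih =>
        obtain ⟨ihmem, ihbar⟩ := ih
        have he : (fun t => ∑ k ∈ insert a s', c k • w k t)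
            = (c a • w a) + (fun t => ∑ k ∈ s', c k • w k t) := by
          funext t; rw [Finset.sum_insert ha]; rfl
        have hmem1 : (c a • w a) ∈ boundedFields Ω := hsmulmem _ _ (hwmem a)
        constructor
        · rw [he]; exact haddmem _ _ hmem1 ihmem
        · intro u
          rw [he, hbar_add I _ hmem1 _ ihmem, Finset.sum_insert ha]
          have h2 : bar I (c a • w a) = c a • bar I (w a) := hbar_smul I (c a) (w a) (hwmem a)
          simp [h2, ihbar u]
    -- per-point approximation data
    have key : ∀ s₀ : Δ, ∃ (K : EssIdeal Ω) (V : Set (βX K)) (w : ∀ t, H t),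
        w ∈ boundedFields Ω ∧ IsOpen V ∧ Φ K s₀ ∈ V ∧
          ∀ s : Δ, Φ K s ∈ V → ‖ξ s - Ψ K s (bar K w (Φ K s))‖ < ε / 2 := by
      intro s₀
      obtain ⟨U, hUo, hs₀U, μ, hμS, hUapp⟩ := hloc s₀ (ε / 4) (by linarith)
      obtain ⟨I₁, ν₁, hν₁, rfl⟩ := hμS
      have hν₁' : LocUnifApprox (bar I₁ '' boundedFields Ω) ν₁ := hν₁
      obtain ⟨V, hVo, hu₀V, b, hbmem, hVapp⟩ := hν₁' (Φ I₁ s₀) (ε / 4) (by linarith)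
      obtain ⟨w, hw, rfl⟩ := hbmem
      have hWo : IsOpen (U ∩ Φ I₁ ⁻¹' V) := hUo.inter (hVo.preimage (hΦcont I₁))
      obtain ⟨I₂, V₂, hV₂o, hs₀2, hsub2⟩ := hbasis _ hWo s₀ ⟨hs₀U, hu₀V⟩
      obtain ⟨K, hK1, hK2⟩ := inf I₁ I₂
      refine ⟨K, Φmap K I₂ hK2 ⁻¹' V₂, w, hw, hV₂o.preimage (hΦmap_cont K I₂ hK2), ?_, ?_⟩
      · show Φmap K I₂ hK2 (Φ K s₀) ∈ V₂
        rw [hΦcompat K I₂ hK2 s₀]; exact hs₀2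
      · intro s hs
        have hs' : s ∈ Φ I₂ ⁻¹' V₂ := by
          have h3 : Φmap K I₂ hK2 (Φ K s) ∈ V₂ := hs
          rwa [hΦcompat K I₂ hK2 s] at h3
        have hsW := hsub2 hs'
        have e1 : ‖Ψ I₁ s (ν₁ (Φ I₁ s)) - ξ s‖ < ε / 4 := hUapp s hsW.1
        have e2 : ‖bar I₁ w (Φ I₁ s) - ν₁ (Φ I₁ s)‖ < ε / 4 := hVapp _ hsW.2
        have ecompat : Ψ K s (bar K w (Φ K s)) = Ψ I₁ s (bar I₁ w (Φ I₁ s)) :=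
          hΨcompat K I₁ hK1 s w hw
        have e3 : ‖Ψ I₁ s (bar I₁ w (Φ I₁ s)) - Ψ I₁ s (ν₁ (Φ I₁ s))‖ < ε / 4 := by
          calc ‖Ψ I₁ s (bar I₁ w (Φ I₁ s)) - Ψ I₁ s (ν₁ (Φ I₁ s))‖
              = ‖bar I₁ w (Φ I₁ s) - ν₁ (Φ I₁ s)‖ := by
                rw [← map_sub]; exact LinearIsometryEquiv.norm_map _ _
            _ < ε / 4 := e2
        calc ‖ξ s - Ψ K s (bar K w (Φ K s))‖
            = ‖ξ s - Ψ I₁ s (bar I₁ w (Φ I₁ s))‖ := by rw [ecompat]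
          _ ≤ ‖ξ s - Ψ I₁ s (ν₁ (Φ I₁ s))‖
              + ‖Ψ I₁ s (ν₁ (Φ I₁ s)) - Ψ I₁ s (bar I₁ w (Φ I₁ s))‖ := by
              have h4 := dist_triangle (ξ s) (Ψ I₁ s (ν₁ (Φ I₁ s)))
                (Ψ I₁ s (bar I₁ w (Φ I₁ s)))
              simpa [dist_eq_norm] using h4
          _ < ε / 4 + ε / 4 :=
              add_lt_add (by rw [norm_sub_rev]; exact e1) (by rw [norm_sub_rev]; exact e3)
          _ = ε / 2 := by ring
    choose K V w hw hVo hmemV hest using key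
    obtain ⟨t, ht⟩ := isCompact_univ.elim_finite_subcover
      (fun s₀ : Δ => Φ (K s₀) ⁻¹' V s₀)
      (fun s₀ => (hVo s₀).preimage (hΦcont (K s₀)))
      (fun s _ => Set.mem_iUnion.2 ⟨s, hmemV s⟩)
    have htne : t.Nonempty := by
      rcases Set.mem_iUnion₂.1 (ht (Set.mem_univ sstar)) with ⟨a, hat, _⟩
      exact ⟨a, hat⟩
    have hcommon : ∀ t' : Finset Δ, t'.Nonempty →
        ∃ K' : EssIdeal Ω, ∀ a ∈ t', K'.1 ⊆ (K a).1 := by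
      intro t'
      induction t' using Finset.induction_on with
      | empty => exact fun h => absurd h (by simp)
      | insert a s' ha ih =>
        intro _
        by_cases hs' : s'.Nonempty
        · obtain ⟨K₁, hK₁⟩ := ih hs'
          obtain ⟨K₂, h1, h2⟩ := inf K₁ (K a)
          refine ⟨K₂, fun b hb => ?_⟩
          rcases Finset.mem_insert.1 hb with rfl | hb
          · exact h2
          · exact h1.trans (hK₁ b hb)
        · refine ⟨K a, fun b hb => ?_⟩
          rcases Finset.mem_insert.1 hb with rfl | hb
          · exact subset_rfl
          · exact absurd ⟨b, hb⟩ hs'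
    obtain ⟨K', hK'⟩ := hcommon t htne
    set g : {a : Δ // a ∈ t} → Set (βX K') :=
      fun k => Φmap K' (K k.1) (hK' k.1 k.2) ⁻¹' V k.1 with hg
    have hgo : ∀ k, IsOpen (g k) := fun k => (hVo k.1).preimage (hΦmap_cont _ _ _)
    have hgcover : (Set.univ : Set (βX K')) ⊆ ⋃ k, g k := by
      intro u _
      obtain ⟨s', rfl⟩ := hΦsurj K' u
      obtain ⟨a, hat, hmem⟩ := Set.mem_iUnion₂.1 (ht (Set.mem_univ s'))
      refine Set.mem_iUnion.2 ⟨⟨a, hat⟩, ?_⟩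
      show Φmap K' (K a) (hK' a hat) (Φ K' s') ∈ V a
      rw [hΦcompat K' (K a) (hK' a hat) s']
      exact hmem
    obtain ⟨f, hf⟩ := PartitionOfUnity.exists_isSubordinate isClosed_univ g hgo hgcover
    set ν : ∀ u, HI K' u :=
      fun u => ∑ k : {a : Δ // a ∈ t}, ((f k u : ℝ) : ℂ) • bar K' (w k.1) u with hνdef
    refine ⟨K', ν, ?_, ?_⟩
    · -- `ν ∈ Ω^{K'}`
      show LocUnifApprox (bar K' '' boundedFields Ω) ν
      intro u₀ δ hδ
      choose M hM0 hMbar using fun k : {a : Δ // a ∈ t} => hbound K' (w k.1) (hw k.1)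
      set S := ∑ k : {a : Δ // a ∈ t}, M k with hS
      have hS0 : (0:ℝ) ≤ S := Finset.sum_nonneg fun k _ => hM0 k
      have hη : 0 < δ / (S + 1) := div_pos hδ (by linarith)
      refine ⟨⋂ k : {a : Δ // a ∈ t}, {u | |f k u - f k u₀| < δ / (S + 1)}, ?_, ?_,
        bar K' (fun tt => ∑ k : {a : Δ // a ∈ t}, ((f k u₀ : ℝ) : ℂ) • w k.1 tt),
        ⟨_, (hbarsum K' (fun k : {a : Δ // a ∈ t} => ((f k u₀ : ℝ) : ℂ))
          (fun k => w k.1) (fun k => hw k.1) Finset.univ).1, rfl⟩, ?_⟩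
      · exact isOpen_iInter_of_finite fun k =>
          isOpen_lt (Continuous.abs ((f k).continuous.sub continuous_const)) continuous_const
      · exact Set.mem_iInter.2 fun k => by simpa using hη
      · intro u hu
        have hbeq := (hbarsum K' (fun k : {a : Δ // a ∈ t} => ((f k u₀ : ℝ) : ℂ))
          (fun k => w k.1) (fun k => hw k.1) Finset.univ).2 u
        rw [hbeq]
        have hν' : ν u = ∑ k : {a : Δ // a ∈ t}, ((f k u : ℝ) : ℂ) • bar K' (w k.1) u := rfl
        rw [hν', ← Finset.sum_sub_distrib]
        have hterm : ∀ k ∈ (Finset.univ : Finset {a : Δ // a ∈ t}),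
            ‖((f k u₀ : ℝ) : ℂ) • bar K' (w k.1) u - ((f k u : ℝ) : ℂ) • bar K' (w k.1) u‖
              ≤ (δ / (S + 1)) * M k := by
          intro k _
          rw [← sub_smul, norm_smul]
          have h1 : ‖((f k u₀ : ℝ) : ℂ) - ((f k u : ℝ) : ℂ)‖ = |f k u₀ - f k u| := by
            rw [← Complex.ofReal_sub, Complex.norm_real]
            exact Real.norm_eq_abs _
          rw [h1]
          have h2 : |f k u₀ - f k u| ≤ δ / (S + 1) := by
            have h3 : |f k u - f k u₀| < δ / (S + 1) := Set.mem_iInter.1 hu k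
            rw [abs_sub_comm] at h3; exact h3.le
          exact mul_le_mul h2 (hMbar k u) (norm_nonneg _) hη.le
        calc ‖∑ k : {a : Δ // a ∈ t},
              (((f k u₀ : ℝ) : ℂ) • bar K' (w k.1) u - ((f k u : ℝ) : ℂ) • bar K' (w k.1) u)‖
            ≤ ∑ k : {a : Δ // a ∈ t},
              ‖((f k u₀ : ℝ) : ℂ) • bar K' (w k.1) u - ((f k u : ℝ) : ℂ) • bar K' (w k.1) u‖ :=
              norm_sum_le _ _
          _ ≤ ∑ k : {a : Δ // a ∈ t}, (δ / (S + 1)) * M k := Finset.sum_le_sum hterm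
          _ = (δ / (S + 1)) * S := by rw [← Finset.mul_sum]
          _ < δ := by
              have h4 : (δ / (S + 1)) * S < (δ / (S + 1)) * (S + 1) :=
                mul_lt_mul_of_pos_left (by linarith) hη
              have h5 : (δ / (S + 1)) * (S + 1) = δ := by field_simp
              linarith
    · -- global estimate
      intro s
      have hsum1 : ∑ k : {a : Δ // a ∈ t}, f k (Φ K' s) = 1 := by
        have h0 := f.sum_eq_one (Set.mem_univ (Φ K' s))
        rwa [finsum_eq_sum_of_fintype] at h0
      have hcsum : ∑ k : {a : Δ // a ∈ t}, ((f k (Φ K' s) : ℝ) : ℂ) = 1 := by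
        rw [← Complex.ofReal_sum, hsum1, Complex.ofReal_one]
      have hψν : Ψ K' s (ν (Φ K' s)) = ∑ k : {a : Δ // a ∈ t},
          ((f k (Φ K' s) : ℝ) : ℂ) • Ψ K' s (bar K' (w k.1) (Φ K' s)) := by
        show Ψ K' s (∑ k : {a : Δ // a ∈ t},
          ((f k (Φ K' s) : ℝ) : ℂ) • bar K' (w k.1) (Φ K' s)) = _
        rw [map_sum]
        exact Finset.sum_congr rfl fun k _ => by rw [map_smul]
      have hdiff : ξ s - Ψ K' s (ν (Φ K' s)) = ∑ k : {a : Δ // a ∈ t},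
          ((f k (Φ K' s) : ℝ) : ℂ) • (ξ s - Ψ K' s (bar K' (w k.1) (Φ K' s))) := by
        rw [hψν]
        simp only [smul_sub, Finset.sum_sub_distrib]
        congr 1
        rw [← Finset.sum_smul, hcsum, one_smul]
      have hterm : ∀ k : {a : Δ // a ∈ t},
          f k (Φ K' s) * ‖ξ s - Ψ K' s (bar K' (w k.1) (Φ K' s))‖
            ≤ f k (Φ K' s) * (ε / 2) := by
        intro k
        by_cases h0 : f k (Φ K' s) = 0
        · simp [h0]
        · have husup : Φ K' s ∈ tsupport (f k) := subset_closure (Function.mem_support.2 h0)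
          have hugk : Φ K' s ∈ g k := hf k husup
          have hVk : Φ (K k.1) s ∈ V k.1 := by
            have h3 : Φmap K' (K k.1) (hK' k.1 k.2) (Φ K' s) ∈ V k.1 := hugk
            rwa [hΦcompat K' (K k.1) (hK' k.1 k.2) s] at h3
          have hcomp : Ψ K' s (bar K' (w k.1) (Φ K' s))
              = Ψ (K k.1) s (bar (K k.1) (w k.1) (Φ (K k.1) s)) :=
            hΨcompat K' (K k.1) (hK' k.1 k.2) s (w k.1) (hw k.1)
          have h5 := hest k.1 s hVk
          rw [← hcomp] at h5
          exact mul_le_mul_of_nonneg_left h5.le (f.nonneg k _)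
      calc ‖ξ s - Ψ K' s (ν (Φ K' s))‖
          = ‖∑ k : {a : Δ // a ∈ t},
              ((f k (Φ K' s) : ℝ) : ℂ) • (ξ s - Ψ K' s (bar K' (w k.1) (Φ K' s)))‖ := by
            rw [hdiff]
        _ ≤ ∑ k : {a : Δ // a ∈ t},
              ‖((f k (Φ K' s) : ℝ) : ℂ) • (ξ s - Ψ K' s (bar K' (w k.1) (Φ K' s)))‖ :=
            norm_sum_le _ _
        _ = ∑ k : {a : Δ // a ∈ t},
              f k (Φ K' s) * ‖ξ s - Ψ K' s (bar K' (w k.1) (Φ K' s))‖ := by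
            refine Finset.sum_congr rfl fun k _ => ?_
            rw [norm_smul, Complex.norm_real, Real.norm_eq_abs,
              abs_of_nonneg (f.nonneg k _)]
        _ ≤ ∑ k : {a : Δ // a ∈ t}, f k (Φ K' s) * (ε / 2) :=
            Finset.sum_le_sum fun k _ => hterm k
        _ = (∑ k : {a : Δ // a ∈ t}, f k (Φ K' s)) * (ε / 2) := by rw [← Finset.sum_mul]
        _ = ε / 2 := by rw [hsum1, one_mul]
        _ < ε := by linarith
  · by_cases hE : Nonempty (EssIdeal Ω)
    · obtain ⟨I₀⟩ := hE
      refine ⟨I₀, bar I₀ (fun t => (0 : H t)), ?_, fun s => absurd ⟨s⟩ hΔne⟩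
      intro u₀ δ hδ
      exact ⟨Set.univ, isOpen_univ, trivial, bar I₀ (fun t => (0 : H t)),
        ⟨_, hzero, rfl⟩, fun u _ => by simpa using hδ⟩
    · exact absurd
        ⟨(hΦlim (fun I => (hE ⟨I⟩).elim) (fun I J h => (hE ⟨I⟩).elim)).choose⟩ hΔne
end
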